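/- arXiv:2007.10572 — 4 statements merged into one kernel-verified Lean document; each statement's English description precedes it below -/
import Mathlib

section
/- Let A be a 2n×2n real positive definite matrix and m ≤ n a positive integer. Every symplectically orthonormal set {u_j, v_j : 1 ≤ j ≤ m} in which each (u_j, v_j) is a symplectic eigenvector pair of A can be extended to a symplectic basis {u_j, v_j : 1 ≤ j ≤ n} of ℝ^{2n} in which each (u_j, v_j) is a symplectic eigenvector pair of A. -/
open Filter Matrix Topology
open scoped Classical

/-- The space of `2n × 2n` real matrices, indexed by `Fin n ⊕ Fin n`. -/
abbrev Mat (n : ℕ) := Matrix (Fin n ⊕ Fin n) (Fin n ⊕ Fin n) ℝ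

/-- `2n × 2m` real matrices. -/
abbrev MatR (n m : ℕ) := Matrix (Fin n ⊕ Fin n) (Fin m ⊕ Fin m) ℝ

/-- The standard symplectic form matrix `J = [[0, I], [-I, 0]]`. -/
def symplJ (n : ℕ) : Mat n := Matrix.fromBlocks 0 1 (-1) 0

/-- The increasingly sorted symplectic eigenvalues of `A` (0-based indexing), defined via
Williamson's theorem: `d : Fin n → ℝ` is the unique monotone positive tuple such that
`MᵀAM = diag d ⊕ diag d` for some symplectic `M` (which exists whenever `A` is positive
definite). -/
noncomputable def symplEig {n : ℕ} (A : Mat n) : Fin n → ℝ :=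
  if h : ∃ d : Fin n → ℝ, Monotone d ∧ (∀ i, 0 < d i) ∧
      ∃ M : Mat n, Mᵀ * symplJ n * M = symplJ n ∧
        Mᵀ * A * M = Matrix.fromBlocks (Matrix.diagonal d) 0 0 (Matrix.diagonal d)
  then h.choose else fun _ => 0

/-- `sEig A j` is the `j`-th symplectic eigenvalue `d_j(A)`, with 1-based index `j`. -/
noncomputable def sEig {n : ℕ} (A : Mat n) (j : ℕ) : ℝ :=
  if h : j - 1 < n then symplEig A ⟨j - 1, h⟩ else 0

/-- `i_m`: the number of indices `k ≤ m` (1-based) with `d_k(A) = d_m(A)`. -/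
noncomputable def iIdx {n : ℕ} (A : Mat n) (m : ℕ) : ℕ :=
  ((Finset.Icc 1 n).filter fun k => k ≤ m ∧ sEig A k = sEig A m).card

/-- `j_m`: the number of indices `k > m` (1-based) with `d_k(A) = d_m(A)`. -/
noncomputable def jIdx {n : ℕ} (A : Mat n) (m : ℕ) : ℕ :=
  ((Finset.Icc 1 n).filter fun k => m < k ∧ sEig A k = sEig A m).card

/-- Membership in `Sp(2n, 2m)`: the columns form a symplectically orthonormal set,
equivalently `Sᵀ J_{2n} S = J_{2m}`. -/
def InSp (n m : ℕ) (S : MatR n m) : Prop := Sᵀ * symplJ n * S = symplJ m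

/-- Membership in `Sp(2n, 2m, A)`: additionally the `j`-th column pair `(u_j, v_j)` is a pair of
symplectic eigenvectors of `A` for the symplectic eigenvalue `d_j(A)`. -/
def InSpA (n m : ℕ) (A : Mat n) (S : MatR n m) : Prop :=
  InSp n m S ∧ ∀ j : Fin m,
    A *ᵥ (fun i => S i (Sum.inl j)) = sEig A (j + 1) • (symplJ n *ᵥ fun i => S i (Sum.inr j)) ∧
    A *ᵥ (fun i => S i (Sum.inr j)) = (-sEig A (j + 1)) • (symplJ n *ᵥ fun i => S i (Sum.inl j))

/-- The inner product `⟨X, Y⟩ = tr (X Y)` on matrices. -/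
noncomputable def minner {α : Type*} [Fintype α] (X Y : Matrix α α ℝ) : ℝ := (X * Y).trace

/-- `σ_m : S(2n) → (-∞, ∞]`, equal to `-2 (d_1(P) + ⋯ + d_m(P))` on positive definite `P`
and `∞` elsewhere. -/
noncomputable def sigmaE {n : ℕ} (m : ℕ) (P : Mat n) : EReal :=
  if P.PosDef then (((-2) * ∑ j ∈ Finset.Icc 1 m, sEig P j : ℝ) : EReal) else ⊤

/-- The real-valued version of `σ_m`, i.e. `-2 (d_1(P) + ⋯ + d_m(P))`. -/
noncomputable def sigmaR {n : ℕ} (m : ℕ) (P : Mat n) : ℝ :=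
  (-2) * ∑ j ∈ Finset.Icc 1 m, sEig P j

/-- The Fenchel subdifferential of `σ_m` at `A`, within the space `S(2n)` of symmetric
matrices. -/
noncomputable def sigmaSub {n : ℕ} (m : ℕ) (A : Mat n) : Set (Mat n) :=
  {X | X.IsSymm ∧ ∀ H : Mat n, H.IsSymm →
    ((minner X (H - A) : ℝ) : EReal) ≤ sigmaE m H - sigmaE m A}

/-- `λ_k↓(C)`: the `k`-th largest eigenvalue (1-based) of the Hermitian matrix `C`. -/
noncomputable def kthLargestEig {ι : Type*} [Fintype ι] [DecidableEq ι]
    (C : Matrix ι ι ℂ) (k : ℕ) : ℝ :=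
  if h : C.IsHermitian then
    ((Finset.univ.val.map h.eigenvalues).sort (· ≤ ·)).getD (Fintype.card ι - k) 0
  else 0

/-- The index set for `M̃`: indices whose symplectic eigenvalue equals `d_m(A)`. -/
abbrev tilIdx {n : ℕ} (A : Mat n) (m : ℕ) := {k : Fin n // symplEig A k = sEig A m}

/-- The index set for `M̄`: indices whose symplectic eigenvalue is `< d_m(A)`. -/
abbrev barIdx {n : ℕ} (A : Mat n) (m : ℕ) := {k : Fin n // symplEig A k < sEig A m}

/-- `M̃`: the submatrix of `M` consisting of the column pairs `(u_k, v_k)` with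
`d_k(A) = d_m(A)`. -/
noncomputable def Mtil {n : ℕ} (A : Mat n) (m : ℕ) (M : Mat n) :
    Matrix (Fin n ⊕ Fin n) (tilIdx A m ⊕ tilIdx A m) ℝ :=
  M.submatrix id (Sum.map Subtype.val Subtype.val)

/-- `M̄`: the submatrix of `M` consisting of the column pairs `(u_k, v_k)` with
`d_k(A) < d_m(A)`. -/
noncomputable def Mbar {n : ℕ} (A : Mat n) (m : ℕ) (M : Mat n) :
    Matrix (Fin n ⊕ Fin n) (barIdx A m ⊕ barIdx A m) ℝ :=
  M.submatrix id (Sum.map Subtype.val Subtype.val)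

/-- `B̄ = -M̄ᵀ B M̄`. -/
noncomputable def Bbar {n : ℕ} (A : Mat n) (m : ℕ) (M B : Mat n) :
    Matrix (barIdx A m ⊕ barIdx A m) (barIdx A m ⊕ barIdx A m) ℝ :=
  -((Mbar A m M)ᵀ * B * Mbar A m M)

/-- `B̃ = -M̃ᵀ B M̃`. -/
noncomputable def Btil {n : ℕ} (A : Mat n) (m : ℕ) (M B : Mat n) :
    Matrix (tilIdx A m ⊕ tilIdx A m) (tilIdx A m ⊕ tilIdx A m) ℝ :=
  -((Mtil A m M)ᵀ * B * Mtil A m M)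

/-- `B̃̃ = B̃₁₁ + B̃₂₂ + i (B̃₁₂ - B̃₁₂ᵀ)`, a Hermitian matrix. -/
noncomputable def Btiltil {n : ℕ} (A : Mat n) (m : ℕ) (M B : Mat n) :
    Matrix (tilIdx A m) (tilIdx A m) ℂ :=
  fun p q =>
    ((Btil A m M B (Sum.inl p) (Sum.inl q) + Btil A m M B (Sum.inr p) (Sum.inr q) : ℝ) : ℂ) +
      Complex.I *
        ((Btil A m M B (Sum.inl p) (Sum.inr q) - Btil A m M B (Sum.inl q) (Sum.inr p) : ℝ) : ℂ)

/-- The directional derivative `d_m′(A; B)` of the `m`-th symplectic eigenvalue (1-based `m`). -/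
noncomputable def dDeriv {n : ℕ} (A B : Mat n) (m : ℕ) : ℝ :=
  limUnder (𝓝[>] (0 : ℝ)) (fun t => (sEig (A + t • B) m - sEig A m) / t)

/-- `m̂`: the smallest 1-based index `j` with `d_j(A) = d_m(A)`. -/
noncomputable def mhat {n : ℕ} (A : Mat n) (m : ℕ) : ℕ :=
  sInf {j : ℕ | 1 ≤ j ∧ sEig A j = sEig A m}

/-- The Clarke directional derivative `f°(A; B)` of `f` at `A` in direction `B`, where the
base point varies in the space of symmetric matrices. -/
noncomputable def clarkeD {n : ℕ} (f : Mat n → ℝ) (A B : Mat n) : ℝ :=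
  Filter.limsup (fun p : Mat n × ℝ => (f (p.1 + p.2 • B) - f p.1) / p.2)
    ((𝓝[{X : Mat n | X.IsSymm}] A) ×ˢ (𝓝[>] (0 : ℝ)))

/-- The Clarke subdifferential `∂° f(A)`. -/
noncomputable def clarkeSub {n : ℕ} (f : Mat n → ℝ) (A : Mat n) : Set (Mat n) :=
  {X | X.IsSymm ∧ ∀ H : Mat n, H.IsSymm → minner X H ≤ clarkeD f A H}

/-- The Michel-Penot directional derivative `f◇(A; B)`. -/
noncomputable def mpD {n : ℕ} (f : Mat n → ℝ) (A B : Mat n) : ℝ :=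
  ⨆ X : {X : Mat n // X.IsSymm},
    Filter.limsup (fun t : ℝ => (f (A + t • X.1 + t • B) - f (A + t • X.1)) / t) (𝓝[>] (0 : ℝ))

/-- The Michel-Penot subdifferential `∂◇ f(A)`. -/
noncomputable def mpSub {n : ℕ} (f : Mat n → ℝ) (A : Mat n) : Set (Mat n) :=
  {X | X.IsSymm ∧ ∀ H : Mat n, H.IsSymm → minner X H ≤ mpD f A H}

/-- `S_m(A)`: the set of normalised symplectic eigenvector pairs of `A` corresponding to the
symplectic eigenvalue `d_m(A)`. -/
noncomputable def SmSet {n : ℕ} (A : Mat n) (m : ℕ) :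
    Set ((Fin n ⊕ Fin n → ℝ) × (Fin n ⊕ Fin n → ℝ)) :=
  {p | A *ᵥ p.1 = sEig A m • (symplJ n *ᵥ p.2) ∧
       A *ᵥ p.2 = (-sEig A m) • (symplJ n *ᵥ p.1) ∧
       p.1 ⬝ᵥ (symplJ n *ᵥ p.2) = 1}

/-- The set `{ -(1/2)(xxᵀ + yyᵀ) : (x,y) ∈ S_m(A) }`. -/
noncomputable def gradSet {n : ℕ} (A : Mat n) (m : ℕ) : Set (Mat n) :=
  {X | ∃ p ∈ SmSet A m,
    X = (-(1 / 2) : ℝ) • (Matrix.vecMulVec p.1 p.1 + Matrix.vecMulVec p.2 p.2)}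

/-- A symplectic eigenvector pair of `A` corresponding to some symplectic eigenvalue `d`. -/
noncomputable def EigPair {n : ℕ} (A : Mat n) (u v : Fin n ⊕ Fin n → ℝ) : Prop :=
  (u ≠ 0 ∨ v ≠ 0) ∧ ∃ d : ℝ, (∃ i : Fin n, symplEig A i = d) ∧
    A *ᵥ u = d • (symplJ n *ᵥ v) ∧ A *ᵥ v = (-d) • (symplJ n *ᵥ u)

/-- The helper extending a finite matrix to a function on `ℕ × ℕ` (by zero). -/
def padFun {r i : ℕ} (U : Matrix (Fin r) (Fin i) ℝ) : ℕ → ℕ → ℝ :=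
  fun a b => if h : a < r ∧ b < i then U ⟨a, h.1⟩ ⟨b, h.2⟩ else 0

/-- The set `Δ_m(A)` of structured `2n × 2m` matrices. -/
noncomputable def DeltaSet {n : ℕ} (A : Mat n) (m : ℕ) : Set (MatR n m) :=
  {H | ∃ (U V : Matrix (Fin (iIdx A m + jIdx A m)) (Fin (iIdx A m)) ℝ),
    ((U.map (Complex.ofReal)) + Complex.I • (V.map (Complex.ofReal)))ᴴ *
      ((U.map (Complex.ofReal)) + Complex.I • (V.map (Complex.ofReal))) = 1 ∧
    ∀ (k : Fin n) (c : Fin m),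
      (H (Sum.inl k) (Sum.inl c) =
        if (k : ℕ) < m - iIdx A m ∧ (c : ℕ) < m - iIdx A m then
          (if (k : ℕ) = (c : ℕ) then 1 else 0)
        else if (m - iIdx A m ≤ (k : ℕ) ∧ (k : ℕ) < m + jIdx A m) ∧ m - iIdx A m ≤ (c : ℕ) then
          padFun U ((k : ℕ) - (m - iIdx A m)) ((c : ℕ) - (m - iIdx A m))
        else 0) ∧
      (H (Sum.inl k) (Sum.inr c) =
        if (m - iIdx A m ≤ (k : ℕ) ∧ (k : ℕ) < m + jIdx A m) ∧ m - iIdx A m ≤ (c : ℕ) then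
          padFun V ((k : ℕ) - (m - iIdx A m)) ((c : ℕ) - (m - iIdx A m))
        else 0) ∧
      (H (Sum.inr k) (Sum.inl c) =
        if (m - iIdx A m ≤ (k : ℕ) ∧ (k : ℕ) < m + jIdx A m) ∧ m - iIdx A m ≤ (c : ℕ) then
          -padFun V ((k : ℕ) - (m - iIdx A m)) ((c : ℕ) - (m - iIdx A m))
        else 0) ∧
      (H (Sum.inr k) (Sum.inr c) =
        if (k : ℕ) < m - iIdx A m ∧ (c : ℕ) < m - iIdx A m then
          (if (k : ℕ) = (c : ℕ) then 1 else 0)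
        else if (m - iIdx A m ≤ (k : ℕ) ∧ (k : ℕ) < m + jIdx A m) ∧ m - iIdx A m ≤ (c : ℕ) then
          padFun U ((k : ℕ) - (m - iIdx A m)) ((c : ℕ) - (m - iIdx A m))
        else 0)}

/-- The operator norm (with respect to the Euclidean norm) of a `2n × 2n` real matrix. -/
noncomputable def opN {n : ℕ} (A : Mat n) : ℝ :=
  ‖Matrix.toEuclideanCLM (𝕜 := ℝ) A‖

namespace Stmt10Aux

variable {n : ℕ}

lemma J_transpose : (symplJ n)ᵀ = -(symplJ n) := by
  simp [symplJ, Matrix.fromBlocks_transpose, Matrix.fromBlocks_neg]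

lemma J_mul_J : symplJ n * symplJ n = (-1 : Mat n) := by
  simp only [symplJ, Matrix.fromBlocks_multiply]
  simp [← Matrix.fromBlocks_one, Matrix.fromBlocks_neg]

lemma dot_J_skew (x y : Fin n ⊕ Fin n → ℝ) :
    x ⬝ᵥ (symplJ n *ᵥ y) = -(y ⬝ᵥ (symplJ n *ᵥ x)) := by
  rw [Matrix.dotProduct_mulVec x, ← Matrix.mulVec_transpose, J_transpose,
    Matrix.neg_mulVec, dotProduct_comm]
  simp

lemma J_mulVec_ne_zero {x : Fin n ⊕ Fin n → ℝ} (hx : x ≠ 0) : symplJ n *ᵥ x ≠ 0 := by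
  intro h
  apply hx
  have := congrArg (fun y => symplJ n *ᵥ y) h
  simpa [Matrix.mulVec_mulVec, J_mul_J, Matrix.neg_mulVec] using this

lemma dot_J_self (x : Fin n ⊕ Fin n → ℝ) : x ⬝ᵥ (symplJ n *ᵥ x) = 0 := by
  have := dot_J_skew x x; linarith


variable {n : ℕ}





lemma J_det_isUnit : IsUnit (symplJ n).det := by
  have h : (symplJ n).det * (symplJ n).det = 1 := by
    rw [← Matrix.det_mul, J_mul_J]
    have : ((-1 : Mat n)).det = (-1 : ℝ) ^ (Fintype.card (Fin n ⊕ Fin n)) * (1 : Mat n).det := by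
      rw [← Matrix.det_smul]; norm_num
    rw [this]
    simp [Even.neg_one_pow (by simp [Fintype.card_sum] : Even (Fintype.card (Fin n ⊕ Fin n)))]
  exact IsUnit.of_mul_eq_one _ h

abbrev E (n : ℕ) := EuclideanSpace ℝ (Fin n ⊕ Fin n)

/-- mulVec as a linear endomorphism of Euclidean space. -/
noncomputable def mvE (M : Mat n) : E n →ₗ[ℝ] E n where
  toFun x := WithLp.toLp 2 (M *ᵥ x)
  map_add' x y := congrArg (WithLp.toLp 2) (Matrix.mulVec_add M x y)
  map_smul' c x := congrArg (WithLp.toLp 2) (Matrix.mulVec_smul M c x)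

lemma mvE_apply (M : Mat n) (x : E n) : mvE M x = M *ᵥ x := rfl

lemma mvE_mvE (M N : Mat n) (x : E n) : mvE M (mvE N x) = mvE (M * N) x :=
  congrArg (WithLp.toLp 2) (Matrix.mulVec_mulVec _ M N)

lemma mvE_one (x : E n) : mvE 1 x = x := congrArg (WithLp.toLp 2) (Matrix.one_mulVec _)

lemma mvE_inj {M : Mat n} (hM : IsUnit M.det) : Function.Injective (mvE (n := n) M) :=
  fun x y h => WithLp.ofLp_injective 2
    (Matrix.mulVec_injective_iff_isUnit.2 (Matrix.isUnit_iff_isUnit_det _ |>.2 hM) (congrArg WithLp.ofLp h))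

lemma inner_eq_dot (x y : E n) : (inner ℝ x y : ℝ) = (x : Fin n ⊕ Fin n → ℝ) ⬝ᵥ y := by
  simp [PiLp.inner_apply, dotProduct, RCLike.inner_apply, mul_comm]

lemma dot_skew {G : Mat n} (hG : Gᵀ = -G) (x y : Fin n ⊕ Fin n → ℝ) :
    (G *ᵥ x) ⬝ᵥ y = -(x ⬝ᵥ (G *ᵥ y)) := by
  rw [dotProduct_comm, Matrix.dotProduct_mulVec y, ← Matrix.mulVec_transpose, hG,
    Matrix.neg_mulVec, neg_dotProduct, dotProduct_comm]

lemma skew_inner {G : Mat n} (hG : Gᵀ = -G) (x y : E n) :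
    (inner ℝ (mvE G x) y : ℝ) = -(inner ℝ x (mvE G y) : ℝ) := by
  rw [inner_eq_dot, inner_eq_dot, mvE_apply, mvE_apply, dot_skew hG]

/-- Core spectral lemma. -/
lemma exists_T_sq_eigen (A : Mat n) (hA : A.PosDef)
    (W : Submodule ℝ (E n)) (hW : W ≠ ⊥)
    (hTW : ∀ x ∈ W, mvE A⁻¹ (mvE (symplJ n) x) ∈ W) :
    ∃ x : E n, x ∈ W ∧ x ≠ 0 ∧ ∃ μ : ℝ, μ < 0 ∧
      mvE A⁻¹ (mvE (symplJ n) (mvE A⁻¹ (mvE (symplJ n) x))) = μ • x := by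
  classical
  obtain ⟨R, hRH, -, hRR⟩ := open MatrixOrder in
    CFC.exists_sqrt_of_isSelfAdjoint_of_quasispectrumRestricts (a := A) hA.1
      (QuasispectrumRestricts.nnreal_of_nonneg hA.posSemidef.nonneg)
  have hRT : Rᵀ = R := by
    rw [← Matrix.conjTranspose_eq_transpose_of_trivial]; exact hRH
  have hRdet : IsUnit R.det := by
    have h1 : R.det * R.det = A.det := by rw [← Matrix.det_mul, hRR]
    have h2 : A.det ≠ 0 := hA.det_pos.ne'
    refine isUnit_iff_ne_zero.2 fun h => h2 ?_
    rw [← h1, h]; ring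
  have hRidet : IsUnit (R⁻¹).det :=
    (Matrix.isUnit_iff_isUnit_det _).1 (Matrix.isUnit_nonsing_inv_iff.2
      ((Matrix.isUnit_iff_isUnit_det _).2 hRdet))
  have hRiT : (R⁻¹)ᵀ = R⁻¹ := by rw [Matrix.transpose_nonsing_inv, hRT]
  set G := R⁻¹ * symplJ n * R⁻¹ with hGdef
  have hGdet : IsUnit G.det := by
    rw [hGdef, Matrix.det_mul, Matrix.det_mul]
    exact (hRidet.mul J_det_isUnit).mul hRidet
  have hGskew : Gᵀ = -G := by
    rw [hGdef, Matrix.transpose_mul, Matrix.transpose_mul, J_transpose, hRiT]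
    simp [Matrix.mul_assoc]
  have hRinv : R⁻¹ * R = 1 := Matrix.nonsing_inv_mul R hRdet
  have hRinv' : R * R⁻¹ = 1 := Matrix.mul_nonsing_inv R hRdet
  have hAinv : A⁻¹ = R⁻¹ * R⁻¹ := by rw [← hRR, Matrix.mul_inv_rev]
  have c1 : ∀ X : Mat n, R * (R⁻¹ * X) = X := fun X => by
    rw [← Matrix.mul_assoc, hRinv', Matrix.one_mul]
  have c2 : ∀ X : Mat n, R⁻¹ * (R * X) = X := fun X => by
    rw [← Matrix.mul_assoc, hRinv, Matrix.one_mul]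
  set W' := W.map (mvE R) with hW'def
  have hW' : W' ≠ ⊥ := by
    rw [Submodule.ne_bot_iff] at hW ⊢
    obtain ⟨x, hx, hx0⟩ := hW
    exact ⟨mvE R x, Submodule.mem_map_of_mem hx,
      fun h => hx0 (mvE_inj hRdet (h.trans (map_zero _).symm))⟩
  have hGW' : ∀ y ∈ W', mvE G y ∈ W' := by
    rintro y hy
    obtain ⟨x, hx, rfl⟩ := hy
    refine ⟨mvE A⁻¹ (mvE (symplJ n) x), hTW x hx, ?_⟩
    simp only [mvE_mvE]
    have key : R * (A⁻¹ * symplJ n) = G * R := by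
      rw [hAinv, hGdef]
      simp [Matrix.mul_assoc, c1, c2, hRinv, hRinv']
    rw [key]
  have hSW' : ∀ y ∈ W', ((mvE G).comp (mvE G)) y ∈ W' := fun y hy => hGW' _ (hGW' y hy)
  set S' := ((mvE G).comp (mvE G)).restrict hSW' with hS'def
  have hsymm : S'.IsSymmetric := by
    intro x y
    rw [Submodule.coe_inner, Submodule.coe_inner, LinearMap.restrict_coe_apply,
      LinearMap.restrict_coe_apply]
    show (inner ℝ (mvE G (mvE G ↑x)) (↑y : E n) : ℝ) = inner ℝ (↑x : E n) (mvE G (mvE G ↑y))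
    rw [skew_inner hGskew, skew_inner hGskew, neg_neg]
  haveI : Nontrivial W' := Submodule.nontrivial_iff_ne_bot.2 hW'
  obtain ⟨μ, hev⟩ : ∃ μ : ℝ, Module.End.HasEigenvalue S' μ :=
    ⟨_, hsymm.hasEigenvalue_iSup_of_finiteDimensional⟩
  obtain ⟨y, hy⟩ := hev.exists_hasEigenvector
  have hy0 : (y : E n) ≠ 0 := fun h => hy.2 (Subtype.coe_injective (by simpa using h))
  have heig : mvE G (mvE G (y : E n)) = μ • (y : E n) := by
    have h := congrArg (Subtype.val) hy.apply_eq_smul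
    rw [LinearMap.restrict_coe_apply] at h
    simpa using h
  have hGy0 : mvE G (y : E n) ≠ 0 := by
    intro h
    exact hy0 (mvE_inj hGdet (h.trans (map_zero (mvE G)).symm))
  have hμ : μ < 0 := by
    have h1 : (inner ℝ (mvE G (mvE G (y : E n))) (y : E n) : ℝ)
        = -(inner ℝ (mvE G (y : E n)) (mvE G (y : E n)) : ℝ) := skew_inner hGskew _ _
    rw [heig, real_inner_smul_left] at h1
    have h2 : (0 : ℝ) < inner ℝ (mvE G (y : E n)) (mvE G (y : E n)) :=
      not_le.1 fun h => hGy0 (real_inner_self_nonpos.1 h)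
    have h3 : (0 : ℝ) < inner ℝ (y : E n) (y : E n) :=
      not_le.1 fun h => hy0 (real_inner_self_nonpos.1 h)
    nlinarith
  obtain ⟨x, hx, hxy⟩ := y.2
  have hx0 : x ≠ 0 := by
    rintro rfl
    rw [map_zero] at hxy
    exact hy0 hxy.symm
  refine ⟨x, hx, hx0, μ, hμ, ?_⟩
  have h4 : mvE G (mvE G (mvE R x)) = μ • mvE R x := by rw [hxy]; exact heig
  have h5 := congrArg (mvE R⁻¹) h4
  rw [LinearMap.map_smul] at h5
  rw [show mvE R⁻¹ (mvE R x) = x by rw [mvE_mvE, hRinv, mvE_one]] at h5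
  simp only [mvE_mvE] at h5
  have key : R⁻¹ * (G * (G * R)) = A⁻¹ * (symplJ n * (A⁻¹ * symplJ n)) := by
    rw [hAinv, hGdef]
    simp [Matrix.mul_assoc, c1, c2, hRinv, hRinv']
  rw [key] at h5
  simp only [mvE_mvE]
  exact h5

variable {n : ℕ}

lemma A_inv_cancel {A : Mat n} (hA : A.PosDef) (x : Fin n ⊕ Fin n → ℝ) :
    A⁻¹ *ᵥ (A *ᵥ x) = x := by
  rw [Matrix.mulVec_mulVec,
    Matrix.nonsing_inv_mul _ ((Matrix.isUnit_iff_isUnit_det _).1 hA.isUnit), Matrix.one_mulVec]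

lemma A_cancel_inv {A : Mat n} (hA : A.PosDef) (x : Fin n ⊕ Fin n → ℝ) :
    A *ᵥ (A⁻¹ *ᵥ x) = x := by
  rw [Matrix.mulVec_mulVec,
    Matrix.mul_nonsing_inv _ ((Matrix.isUnit_iff_isUnit_det _).1 hA.isUnit), Matrix.one_mulVec]

lemma dot_symm_mulVec {M : Mat n} (hM : Mᵀ = M) (x y : Fin n ⊕ Fin n → ℝ) :
    (M *ᵥ x) ⬝ᵥ y = x ⬝ᵥ (M *ᵥ y) := by
  rw [dotProduct_comm, Matrix.dotProduct_mulVec y, ← Matrix.mulVec_transpose, hM,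
    dotProduct_comm]

lemma posdef_transpose {A : Mat n} (hA : A.PosDef) : Aᵀ = A := by
  rw [← Matrix.conjTranspose_eq_transpose_of_trivial]; exact hA.1

lemma posdef_dot_pos {A : Mat n} (hA : A.PosDef) {x : Fin n ⊕ Fin n → ℝ} (hx : x ≠ 0) :
    0 < x ⬝ᵥ (A *ᵥ x) := by
  have := hA.dotProduct_mulVec_pos hx
  simpa using this

lemma transp_dot (M : Mat n) (x y : Fin n ⊕ Fin n → ℝ) :
    (Mᵀ *ᵥ x) ⬝ᵥ y = x ⬝ᵥ (M *ᵥ y) := by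
  rw [Matrix.mulVec_transpose, ← Matrix.dotProduct_mulVec]

/-- eigen equations give the action of `A⁻¹ J`. -/
lemma Ainv_J_u {A : Mat n} (hA : A.PosDef) {uj vj : Fin n ⊕ Fin n → ℝ} {dj : ℝ} (hdj : 0 < dj)
    (h2 : A *ᵥ vj = (-dj) • (symplJ n *ᵥ uj)) :
    A⁻¹ *ᵥ (symplJ n *ᵥ uj) = (-(1/dj)) • vj := by
  have h := congrArg (fun z => A⁻¹ *ᵥ z) h2
  simp only [Matrix.mulVec_smul] at h
  rw [A_inv_cancel hA] at h
  have := congrArg (fun z => (-(1/dj)) • z) h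
  simp only [smul_smul] at this
  rw [show (-(1/dj)) * (-dj) = 1 by field_simp] at this
  rw [one_smul] at this
  exact this.symm

lemma Ainv_J_v {A : Mat n} (hA : A.PosDef) {uj vj : Fin n ⊕ Fin n → ℝ} {dj : ℝ} (hdj : 0 < dj)
    (h1 : A *ᵥ uj = dj • (symplJ n *ᵥ vj)) :
    A⁻¹ *ᵥ (symplJ n *ᵥ vj) = (1/dj) • uj := by
  have h := congrArg (fun z => A⁻¹ *ᵥ z) h1
  simp only [Matrix.mulVec_smul] at h
  rw [A_inv_cancel hA] at h
  have := congrArg (fun z => (1/dj) • z) h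
  simp only [smul_smul] at this
  rw [show (1/dj) * dj = 1 by field_simp] at this
  rw [one_smul] at this
  exact this.symm

/-- Find a new normalized eigenpair symplectically orthogonal to a given family. -/
lemma exists_new_pair (A : Mat n) (hA : A.PosDef) {m' : ℕ} (hm' : m' < n)
    (u v : Fin m' → (Fin n ⊕ Fin n → ℝ)) (d : Fin m' → ℝ)
    (heq1 : ∀ j, A *ᵥ u j = d j • (symplJ n *ᵥ v j))
    (heq2 : ∀ j, A *ᵥ v j = (-(d j)) • (symplJ n *ᵥ u j))
    (hd : ∀ j, 0 < d j) :
    ∃ (u0 v0 : Fin n ⊕ Fin n → ℝ) (d0 : ℝ), 0 < d0 ∧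
      A *ᵥ u0 = d0 • (symplJ n *ᵥ v0) ∧ A *ᵥ v0 = (-d0) • (symplJ n *ᵥ u0) ∧
      u0 ⬝ᵥ (symplJ n *ᵥ v0) = 1 ∧
      (∀ j, u j ⬝ᵥ (symplJ n *ᵥ u0) = 0 ∧ u j ⬝ᵥ (symplJ n *ᵥ v0) = 0 ∧
            v j ⬝ᵥ (symplJ n *ᵥ u0) = 0 ∧ v j ⬝ᵥ (symplJ n *ᵥ v0) = 0) := by
  classical
  have hAT : Aᵀ = A := posdef_transpose hA
  have hAiT : (A⁻¹)ᵀ = A⁻¹ := by rw [Matrix.transpose_nonsing_inv, hAT]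
  have hAinv : A⁻¹.PosDef := hA.inv
  -- the constraint map
  let c : Fin m' ⊕ Fin m' → (Fin n ⊕ Fin n → ℝ) := Sum.elim u v
  let toE : (Fin n ⊕ Fin n → ℝ) → E n := fun x => WithLp.toLp 2 x
  let F : Fin m' ⊕ Fin m' → (E n →ₗ[ℝ] ℝ) := fun k =>
    (innerSL ℝ (toE ((symplJ n)ᵀ *ᵥ c k))).toLinearMap
  let Φ : E n →ₗ[ℝ] (Fin m' ⊕ Fin m' → ℝ) := LinearMap.pi F
  have hΦapp : ∀ (x : E n) (k : Fin m' ⊕ Fin m'), Φ x k = c k ⬝ᵥ (symplJ n *ᵥ x) := by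
    intro x k
    show (inner ℝ (toE ((symplJ n)ᵀ *ᵥ c k)) x : ℝ) = _
    rw [inner_eq_dot]
    exact transp_dot _ _ _
  set W := LinearMap.ker Φ with hWdef
  have hmemW : ∀ x : E n, x ∈ W ↔ ∀ k, c k ⬝ᵥ (symplJ n *ᵥ x) = 0 := by
    intro x
    rw [hWdef, LinearMap.mem_ker, funext_iff]
    refine forall_congr' fun k => ?_
    rw [hΦapp]
    exact Iff.rfl
  -- W is nontrivial
  have hW : W ≠ ⊥ := by
    intro hbot
    have h1 := LinearMap.finrank_range_add_finrank_ker Φ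
    have h2 : Module.finrank ℝ (LinearMap.range Φ) ≤ m' + m' := by
      have h := Submodule.finrank_le (LinearMap.range Φ)
      simpa [Module.finrank_pi] using h
    have h3 : Module.finrank ℝ (E n) = n + n := by
      simp [finrank_euclideanSpace]
    rw [← hWdef, hbot] at h1
    rw [h3, finrank_bot] at h1
    omega
  -- W is invariant under T = A⁻¹ J
  have hTW : ∀ x ∈ W, mvE A⁻¹ (mvE (symplJ n) x) ∈ W := by
    intro x hx
    rw [hmemW] at hx ⊢
    intro k
    have hstep : ∀ w : Fin n ⊕ Fin n → ℝ,
        c k ⬝ᵥ (symplJ n *ᵥ (A⁻¹ *ᵥ (symplJ n *ᵥ w)))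
          = -((symplJ n *ᵥ w) ⬝ᵥ (A⁻¹ *ᵥ (symplJ n *ᵥ c k))) := by
      intro w
      rw [dot_J_skew, dot_symm_mulVec hAiT]
    have happ : mvE A⁻¹ (mvE (symplJ n) x) = toE (A⁻¹ *ᵥ (symplJ n *ᵥ x)) := rfl
    rw [happ]
    show c k ⬝ᵥ (symplJ n *ᵥ (A⁻¹ *ᵥ (symplJ n *ᵥ x))) = 0
    rw [hstep]
    cases k with
    | inl j =>
      rw [show c (Sum.inl j) = u j from rfl, Ainv_J_u hA (hd j) (heq2 j)]
      have := hx (Sum.inr j)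
      rw [show c (Sum.inr j) = v j from rfl] at this
      rw [dotProduct_smul, dotProduct_comm]
      rw [this]
      simp
    | inr j =>
      rw [show c (Sum.inr j) = v j from rfl, Ainv_J_v hA (hd j) (heq1 j)]
      have := hx (Sum.inl j)
      rw [show c (Sum.inl j) = u j from rfl] at this
      rw [dotProduct_smul, dotProduct_comm]
      rw [this]
      simp
  -- apply the core spectral lemma
  obtain ⟨x, hxW, hx0, μ, hμ, heig⟩ := exists_T_sq_eigen A hA W hW hTW
  have heig' : A⁻¹ *ᵥ (symplJ n *ᵥ (A⁻¹ *ᵥ (symplJ n *ᵥ (x : Fin n ⊕ Fin n → ℝ))))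
      = μ • (x : Fin n ⊕ Fin n → ℝ) := congrArg WithLp.ofLp heig
  have hxW' : ∀ k, c k ⬝ᵥ (symplJ n *ᵥ (x : Fin n ⊕ Fin n → ℝ)) = 0 := (hmemW x).1 hxW
  have hTx : ∀ k, c k ⬝ᵥ (symplJ n *ᵥ (A⁻¹ *ᵥ (symplJ n *ᵥ (x : Fin n ⊕ Fin n → ℝ)))) = 0 := by
    have h := (hmemW _).1 (hTW x hxW)
    intro k
    exact h k
  -- construct the pair
  set lam := Real.sqrt (-μ) with hlam
  have hlam0 : 0 < lam := Real.sqrt_pos.2 (by linarith)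
  have hlamsq : lam * lam = -μ := Real.mul_self_sqrt (by linarith)
  set Tx := A⁻¹ *ᵥ (symplJ n *ᵥ (x : Fin n ⊕ Fin n → ℝ)) with hTxdef
  set preu := (1/lam) • Tx with hpreu
  -- A *ᵥ preu = (1/lam) • J x
  have he1 : A *ᵥ preu = (1/lam) • (symplJ n *ᵥ (x : Fin n ⊕ Fin n → ℝ)) := by
    rw [hpreu, Matrix.mulVec_smul, hTxdef, A_cancel_inv hA]
  -- A *ᵥ x = -(1/lam) • J preu
  have he2 : A *ᵥ (x : Fin n ⊕ Fin n → ℝ) = (-(1/lam)) • (symplJ n *ᵥ preu) := by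
    have h1 := congrArg (fun z => A *ᵥ z) heig'
    simp only [Matrix.mulVec_smul] at h1
    rw [A_cancel_inv hA] at h1
    rw [hpreu, Matrix.mulVec_smul, hTxdef]
    rw [h1, smul_smul, smul_smul]
    have hcoef : -(1/lam) * (1/lam) * μ = 1 := by
      field_simp
      nlinarith
    rw [hcoef, one_smul]
  -- normalization constant
  have hs : preu ⬝ᵥ (symplJ n *ᵥ (x : Fin n ⊕ Fin n → ℝ)) > 0 := by
    rw [hpreu, smul_dotProduct, hTxdef]
    have h1 : (A⁻¹ *ᵥ (symplJ n *ᵥ (x : Fin n ⊕ Fin n → ℝ))) ⬝ᵥ (symplJ n *ᵥ (x : Fin n ⊕ Fin n → ℝ))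
        = (symplJ n *ᵥ (x : Fin n ⊕ Fin n → ℝ)) ⬝ᵥ (A⁻¹ *ᵥ (symplJ n *ᵥ (x : Fin n ⊕ Fin n → ℝ))) :=
      dotProduct_comm _ _
    rw [h1]
    have h2 : (0:ℝ) < (symplJ n *ᵥ (x : Fin n ⊕ Fin n → ℝ)) ⬝ᵥ (A⁻¹ *ᵥ (symplJ n *ᵥ (x : Fin n ⊕ Fin n → ℝ))) :=
      posdef_dot_pos hAinv (J_mulVec_ne_zero (by
        intro h
        exact hx0 (WithLp.ofLp_injective 2 h)))
    have := mul_pos (by positivity : (0:ℝ) < 1/lam) h2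
    simpa using this
  set sN := preu ⬝ᵥ (symplJ n *ᵥ (x : Fin n ⊕ Fin n → ℝ)) with hsN
  set r := 1 / Real.sqrt sN with hr
  have hr0 : 0 < r := by
    rw [hr]
    positivity
  have hrsq : r * r * sN = 1 := by
    rw [hr]
    rw [div_mul_div_comm, Real.mul_self_sqrt (le_of_lt hs)]
    field_simp
  refine ⟨r • preu, r • (x : Fin n ⊕ Fin n → ℝ), 1/lam, by positivity, ?_, ?_, ?_, ?_⟩
  · rw [Matrix.mulVec_smul, he1, Matrix.mulVec_smul, smul_comm]
  · rw [Matrix.mulVec_smul, he2, Matrix.mulVec_smul, smul_comm]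
    simp [hpreu, Matrix.mulVec_smul]
  · rw [smul_dotProduct, Matrix.mulVec_smul, dotProduct_smul, smul_smul,
      smul_eq_mul, ← hsN]
    exact hrsq
  · intro j
    have o1 := hTx (Sum.inl j)
    have o2 := hTx (Sum.inr j)
    have o3 := hxW' (Sum.inl j)
    have o4 := hxW' (Sum.inr j)
    rw [show c (Sum.inl j) = u j from rfl] at o1 o3
    rw [show c (Sum.inr j) = v j from rfl] at o2 o4
    have opreu1 : u j ⬝ᵥ (symplJ n *ᵥ preu) = 0 := by
      rw [hpreu, Matrix.mulVec_smul, dotProduct_smul, o1]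
      simp
    have opreu2 : v j ⬝ᵥ (symplJ n *ᵥ preu) = 0 := by
      rw [hpreu, Matrix.mulVec_smul, dotProduct_smul, o2]
      simp
    refine ⟨?_, ?_, ?_, ?_⟩ <;>
      rw [Matrix.mulVec_smul, dotProduct_smul] <;>
      simp [opreu1, opreu2, o3, o4]

variable {n : ℕ}

/-- A symplectically orthonormal family of eigenpairs with positive eigenvalues. -/
def Fam (A : Mat n) (k : ℕ) (u v : Fin k → (Fin n ⊕ Fin n → ℝ)) (d : Fin k → ℝ) : Prop :=
  (∀ j, 0 < d j) ∧
  (∀ j, A *ᵥ u j = d j • (symplJ n *ᵥ v j)) ∧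
  (∀ j, A *ᵥ v j = (-(d j)) • (symplJ n *ᵥ u j)) ∧
  (∀ j k', u j ⬝ᵥ (symplJ n *ᵥ u k') = 0) ∧
  (∀ j k', v j ⬝ᵥ (symplJ n *ᵥ v k') = 0) ∧
  (∀ j k', u j ⬝ᵥ (symplJ n *ᵥ v k') = if j = k' then 1 else 0)

lemma fam_step (A : Mat n) (hA : A.PosDef) {k : ℕ} (hk : k < n)
    {u v : Fin k → (Fin n ⊕ Fin n → ℝ)} {d : Fin k → ℝ} (hfam : Fam A k u v d) :
    ∃ (u' v' : Fin (k+1) → (Fin n ⊕ Fin n → ℝ)) (d' : Fin (k+1) → ℝ),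
      Fam A (k+1) u' v' d' ∧
      (∀ j : Fin k, u' j.castSucc = u j ∧ v' j.castSucc = v j ∧ d' j.castSucc = d j) := by
  obtain ⟨hd, he1, he2, huu, hvv, huv⟩ := hfam
  obtain ⟨u0, v0, d0, hd0, g1, g2, gnorm, gorth⟩ := exists_new_pair A hA hk u v d he1 he2 hd
  refine ⟨Fin.snoc u u0, Fin.snoc v v0, Fin.snoc d d0, ⟨?_, ?_, ?_, ?_, ?_, ?_⟩, ?_⟩
  · intro j
    refine Fin.lastCases ?_ ?_ j <;> simp [Fin.snoc_castSucc, Fin.snoc_last, hd0, hd]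
  · intro j
    refine Fin.lastCases ?_ ?_ j <;> simp [Fin.snoc_castSucc, Fin.snoc_last, g1, he1]
  · intro j
    refine Fin.lastCases ?_ ?_ j <;> simp [Fin.snoc_castSucc, Fin.snoc_last, g2, he2]
  · intro j k'
    refine Fin.lastCases ?_ ?_ j <;> [skip; intro j'] <;>
      refine Fin.lastCases ?_ ?_ k' <;> try intro k''
    · simp [Fin.snoc_last, dot_J_self]
    · simp only [Fin.snoc_last, Fin.snoc_castSucc]
      rw [dot_J_skew]
      simp [(gorth _).1]
    · simp [Fin.snoc_last, Fin.snoc_castSucc, (gorth _).1]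
    · simp [Fin.snoc_castSucc, huu]
  · intro j k'
    refine Fin.lastCases ?_ ?_ j <;> [skip; intro j'] <;>
      refine Fin.lastCases ?_ ?_ k' <;> try intro k''
    · simp [Fin.snoc_last, dot_J_self]
    · simp only [Fin.snoc_last, Fin.snoc_castSucc]
      rw [dot_J_skew]
      simp [(gorth _).2.2.2]
    · simp [Fin.snoc_last, Fin.snoc_castSucc, (gorth _).2.2.2]
    · simp [Fin.snoc_castSucc, hvv]
  · intro j k'
    refine Fin.lastCases ?_ ?_ j <;> [skip; intro j'] <;>
      refine Fin.lastCases ?_ ?_ k' <;> try intro k''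
    · simp [Fin.snoc_last, gnorm]
    · simp only [Fin.snoc_last, Fin.snoc_castSucc]
      rw [dot_J_skew]
      simp [(gorth _).2.2.1, (Fin.castSucc_lt_last k'').ne']
    · simp [Fin.snoc_last, Fin.snoc_castSucc, (gorth _).2.1, (Fin.castSucc_lt_last j').ne]
    · simp [Fin.snoc_castSucc, huv, Fin.castSucc_inj]
  · intro j
    simp [Fin.snoc_castSucc]

lemma fam_build (A : Mat n) (hA : A.PosDef) {m0 : ℕ}
    {u v : Fin m0 → (Fin n ⊕ Fin n → ℝ)} {d : Fin m0 → ℝ} (hfam : Fam A m0 u v d) :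
    ∀ k, m0 ≤ k → k ≤ n →
    ∃ (u' v' : Fin k → (Fin n ⊕ Fin n → ℝ)) (d' : Fin k → ℝ),
      Fam A k u' v' d' ∧
      (∀ (h : m0 ≤ k) (j : Fin m0), u' (Fin.castLE h j) = u j ∧ v' (Fin.castLE h j) = v j) := by
  intro k
  refine Nat.le_induction ?_ ?_ k
  · intro _
    exact ⟨u, v, d, hfam, fun h j => by simp [Fin.castLE]⟩
  · intro k hm0k ih hk1
    obtain ⟨u', v', d', hfam', hpre⟩ := ih (by omega)
    obtain ⟨u'', v'', d'', hfam'', hpre'⟩ := fam_step A hA (by omega : k < n) hfam'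
    refine ⟨u'', v'', d'', hfam'', ?_⟩
    intro h j
    have hcast : Fin.castLE h j = Fin.castSucc (Fin.castLE hm0k j) := by
      ext; simp
    rw [hcast]
    obtain ⟨e1, e2, _⟩ := hpre' (Fin.castLE hm0k j)
    obtain ⟨f1, f2⟩ := hpre hm0k j
    exact ⟨by rw [e1, f1], by rw [e2, f2]⟩


variable {n : ℕ}

lemma sandwich_entry (M N : Mat n) (a b : Fin n ⊕ Fin n) :
    (Mᵀ * N * M) a b = (fun i => M i a) ⬝ᵥ (N *ᵥ (fun i => M i b)) := by
  rw [Matrix.mul_assoc]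
  simp only [Matrix.mul_apply, Matrix.transpose_apply, Matrix.mulVec, dotProduct]

lemma J_mulVec_inl (z : Fin n ⊕ Fin n → ℝ) (i : Fin n) :
    (symplJ n *ᵥ z) (Sum.inl i) = z (Sum.inr i) := by
  simp [symplJ, Matrix.mulVec, dotProduct, Fintype.sum_sum_type, Matrix.fromBlocks,
    Matrix.one_apply, Finset.sum_ite_eq]

lemma J_mulVec_inr (z : Fin n ⊕ Fin n → ℝ) (i : Fin n) :
    (symplJ n *ᵥ z) (Sum.inr i) = -(z (Sum.inl i)) := by
  simp [symplJ, Matrix.mulVec, dotProduct, Fintype.sum_sum_type, Matrix.fromBlocks,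
    Matrix.one_apply, Finset.sum_ite_eq]

/-- Williamson existence witness from a full eigenbasis family. -/
lemma williamson_ex (A : Mat n) {u v : Fin n → (Fin n ⊕ Fin n → ℝ)} {d : Fin n → ℝ}
    (hfam : Fam A n u v d) :
    ∃ dd : Fin n → ℝ, Monotone dd ∧ (∀ i, 0 < dd i) ∧
      ∃ M : Mat n, Mᵀ * symplJ n * M = symplJ n ∧
        Mᵀ * A * M = Matrix.fromBlocks (Matrix.diagonal dd) 0 0 (Matrix.diagonal dd) := by
  classical
  obtain ⟨hd, he1, he2, huu, hvv, huv⟩ := hfam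
  set σ := Tuple.sort d with hσ
  set dd := d ∘ σ with hdd
  refine ⟨dd, Tuple.monotone_sort d, fun i => hd (σ i), ?_⟩
  set M : Mat n := fun i k => Sum.elim (fun j => u (σ j) i) (fun j => v (σ j) i) k with hM
  have hcol : ∀ j : Fin n, ((fun i => M i (Sum.inl j)) = u (σ j)) ∧
      ((fun i => M i (Sum.inr j)) = v (σ j)) := fun j => ⟨rfl, rfl⟩
  have hvu : ∀ j k : Fin n, v j ⬝ᵥ (symplJ n *ᵥ u k) = if k = j then -1 else 0 := by
    intro j k
    rw [dot_J_skew, huv]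
    split <;> norm_num
  refine ⟨M, ?_, ?_⟩
  · ext a b
    rw [sandwich_entry]
    cases a with
    | inl j => cases b with
      | inl k =>
        show u (σ j) ⬝ᵥ (symplJ n *ᵥ u (σ k)) = _
        rw [huu]
        simp [symplJ]
      | inr k =>
        show u (σ j) ⬝ᵥ (symplJ n *ᵥ v (σ k)) = _
        rw [huv]
        simp [symplJ, Matrix.one_apply, Equiv.apply_eq_iff_eq]
    | inr j => cases b with
      | inl k =>
        show v (σ j) ⬝ᵥ (symplJ n *ᵥ u (σ k)) = _
        rw [hvu]
        simp [symplJ, Matrix.one_apply, Equiv.apply_eq_iff_eq]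
        split <;> simp_all <;> omega
      | inr k =>
        show v (σ j) ⬝ᵥ (symplJ n *ᵥ v (σ k)) = _
        rw [hvv]
        simp [symplJ]
  · ext a b
    rw [sandwich_entry]
    cases a with
    | inl j => cases b with
      | inl k =>
        show u (σ j) ⬝ᵥ (A *ᵥ u (σ k)) = _
        rw [he1, dotProduct_smul, huv]
        simp only [Matrix.fromBlocks_apply₁₁, Matrix.diagonal_apply, Equiv.apply_eq_iff_eq,
          smul_eq_mul, hdd, Function.comp_apply]
        split <;> simp_all
      | inr k =>
        show u (σ j) ⬝ᵥ (A *ᵥ v (σ k)) = _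
        rw [he2, dotProduct_smul, huu]
        simp [Matrix.fromBlocks]
    | inr j => cases b with
      | inl k =>
        show v (σ j) ⬝ᵥ (A *ᵥ u (σ k)) = _
        rw [he1, dotProduct_smul, hvv]
        simp [Matrix.fromBlocks]
      | inr k =>
        show v (σ j) ⬝ᵥ (A *ᵥ v (σ k)) = _
        rw [he2, dotProduct_smul, hvu]
        simp only [Matrix.fromBlocks_apply₂₂, Matrix.diagonal_apply, Equiv.apply_eq_iff_eq,
          smul_eq_mul, hdd, Function.comp_apply]
        split <;> split <;> simp_all


variable {n : ℕ}
lemma D_mulVec_inl (dd : Fin n → ℝ) (z : Fin n ⊕ Fin n → ℝ) (i : Fin n) :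
    ((Matrix.fromBlocks (Matrix.diagonal dd) 0 0 (Matrix.diagonal dd) : Mat n) *ᵥ z)
      (Sum.inl i) = dd i * z (Sum.inl i) := by
  simp [Matrix.mulVec, dotProduct, Fintype.sum_sum_type, Matrix.diagonal,
    Finset.sum_ite_eq, Matrix.fromBlocks]

lemma D_mulVec_inr (dd : Fin n → ℝ) (z : Fin n ⊕ Fin n → ℝ) (i : Fin n) :
    ((Matrix.fromBlocks (Matrix.diagonal dd) 0 0 (Matrix.diagonal dd) : Mat n) *ᵥ z)
      (Sum.inr i) = dd i * z (Sum.inr i) := by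
  simp [Matrix.mulVec, dotProduct, Fintype.sum_sum_type, Matrix.diagonal,
    Finset.sum_ite_eq, Matrix.fromBlocks]

lemma sandwich_mulVec (M N : Mat n) (a : Fin n ⊕ Fin n → ℝ) :
    Mᵀ *ᵥ (N *ᵥ (M *ᵥ a)) = (Mᵀ * N * M) *ᵥ a := by
  rw [Matrix.mulVec_mulVec, Matrix.mulVec_mulVec, Matrix.mul_assoc]

lemma eig_identify (A : Mat n) {dd : Fin n → ℝ} (hpos : ∀ i, 0 < dd i) {M : Mat n}
    (hMJ : Mᵀ * symplJ n * M = symplJ n)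
    (hMA : Mᵀ * A * M = Matrix.fromBlocks (Matrix.diagonal dd) 0 0 (Matrix.diagonal dd))
    {u0 v0 : Fin n ⊕ Fin n → ℝ} {d0 : ℝ} (hd0 : 0 < d0) (hu0 : u0 ≠ 0)
    (he1 : A *ᵥ u0 = d0 • (symplJ n *ᵥ v0)) (he2 : A *ᵥ v0 = (-d0) • (symplJ n *ᵥ u0)) :
    ∃ i : Fin n, dd i = d0 := by
  classical
  have hJdet : (symplJ n).det ≠ 0 := isUnit_iff_ne_zero.1 J_det_isUnit
  have hMdet : IsUnit M.det := by
    have h := congrArg Matrix.det hMJ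
    rw [Matrix.det_mul, Matrix.det_mul, Matrix.det_transpose] at h
    refine isUnit_iff_ne_zero.2 fun h0 => hJdet ?_
    rw [h0] at h
    simpa using h.symm
  set D : Mat n := Matrix.fromBlocks (Matrix.diagonal dd) 0 0 (Matrix.diagonal dd) with hD
  set a := M⁻¹ *ᵥ u0 with ha
  set b := M⁻¹ *ᵥ v0 with hb
  have hMa : M *ᵥ a = u0 := by
    rw [ha, Matrix.mulVec_mulVec, Matrix.mul_nonsing_inv _ ((Matrix.isUnit_iff_isUnit_det _).1
      ((Matrix.isUnit_iff_isUnit_det _).2 hMdet)), Matrix.one_mulVec]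
  have hMb : M *ᵥ b = v0 := by
    rw [hb, Matrix.mulVec_mulVec, Matrix.mul_nonsing_inv _ hMdet, Matrix.one_mulVec]
  have hD1 : D *ᵥ a = d0 • (symplJ n *ᵥ b) := by
    have h := congrArg (fun z => Mᵀ *ᵥ z) he1
    rw [← hMa, ← hMb] at h
    rw [sandwich_mulVec, hMA, Matrix.mulVec_smul, sandwich_mulVec, hMJ] at h
    exact h
  have hD2 : D *ᵥ b = (-d0) • (symplJ n *ᵥ a) := by
    have h := congrArg (fun z => Mᵀ *ᵥ z) he2
    rw [← hMa, ← hMb] at h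
    rw [sandwich_mulVec, hMA, Matrix.mulVec_smul, sandwich_mulVec, hMJ] at h
    exact h
  have ha0 : a ≠ 0 := by
    intro h
    apply hu0
    rw [← hMa, h, Matrix.mulVec_zero]
  obtain ⟨k, hk⟩ := Function.ne_iff.1 ha0
  have hk' : a k ≠ 0 := by simpa using hk
  cases k with
  | inl i =>
    have e1l : dd i * a (Sum.inl i) = d0 * b (Sum.inr i) := by
      have := congrFun hD1 (Sum.inl i)
      rwa [D_mulVec_inl, Pi.smul_apply, J_mulVec_inl, smul_eq_mul] at this
    have e2r : dd i * b (Sum.inr i) = d0 * a (Sum.inl i) := by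
      have := congrFun hD2 (Sum.inr i)
      rw [D_mulVec_inr, Pi.smul_apply, J_mulVec_inr, smul_eq_mul] at this
      rw [this]; ring
    have h1 : dd i * dd i * a (Sum.inl i) = d0 * d0 * a (Sum.inl i) := by
      linear_combination (dd i) * e1l + d0 * e2r
    have hsq : dd i * dd i = d0 * d0 := mul_right_cancel₀ hk' h1
    have h2 : (dd i - d0) * (dd i + d0) = 0 := by linear_combination hsq
    rcases mul_eq_zero.1 h2 with h3 | h3
    · exact ⟨i, by linarith⟩
    · have := hpos i
      linarith
  | inr i =>
    have e1r : dd i * a (Sum.inr i) = -(d0 * b (Sum.inl i)) := by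
      have := congrFun hD1 (Sum.inr i)
      rw [D_mulVec_inr, Pi.smul_apply, J_mulVec_inr, smul_eq_mul] at this
      rw [this]; ring
    have e2l : dd i * b (Sum.inl i) = -(d0 * a (Sum.inr i)) := by
      have := congrFun hD2 (Sum.inl i)
      rw [D_mulVec_inl, Pi.smul_apply, J_mulVec_inl, smul_eq_mul] at this
      rw [this]; ring
    have h1 : dd i * dd i * a (Sum.inr i) = d0 * d0 * a (Sum.inr i) := by
      linear_combination (dd i) * e1r - d0 * e2l
    have hsq : dd i * dd i = d0 * d0 := mul_right_cancel₀ hk' h1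
    have h2 : (dd i - d0) * (dd i + d0) = 0 := by linear_combination hsq
    rcases mul_eq_zero.1 h2 with h3 | h3
    · exact ⟨i, by linarith⟩
    · have := hpos i
      linarith

end Stmt10Aux

theorem stmt10 {n m : ℕ} (hmn : m ≤ n) (A : Mat n) (hA : A.PosDef)
    (u v : Fin m → (Fin n ⊕ Fin n → ℝ))
    (horth : ∀ j k : Fin m,
      (u j) ⬝ᵥ (symplJ n *ᵥ u k) = 0 ∧ (v j) ⬝ᵥ (symplJ n *ᵥ v k) = 0)
    (hnorm : ∀ j k : Fin m, (u j) ⬝ᵥ (symplJ n *ᵥ v k) = if j = k then 1 else 0)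
    (hpair : ∀ j : Fin m, EigPair A (u j) (v j)) :
    ∃ u' v' : Fin n → (Fin n ⊕ Fin n → ℝ),
      (∀ j : Fin m, u' (Fin.castLE hmn j) = u j ∧ v' (Fin.castLE hmn j) = v j) ∧
      (∀ j k : Fin n,
        (u' j) ⬝ᵥ (symplJ n *ᵥ u' k) = 0 ∧ (v' j) ⬝ᵥ (symplJ n *ᵥ v' k) = 0) ∧
      (∀ j k : Fin n, (u' j) ⬝ᵥ (symplJ n *ᵥ v' k) = if j = k then 1 else 0) ∧
      (∀ j : Fin n, EigPair A (u' j) (v' j)) := by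
  classical
  choose dfun hP using fun j => (hpair j).2
  have hu0 : ∀ j : Fin m, u j ≠ 0 := by
    intro j h
    have h1 := hnorm j j
    rw [h, if_pos rfl] at h1
    simp [zero_dotProduct] at h1
  have hdpos : ∀ j, 0 < dfun j := by
    intro j
    have h1 := Stmt10Aux.posdef_dot_pos hA (hu0 j)
    rw [(hP j).2.1, dotProduct_smul, hnorm j j, if_pos rfl] at h1
    simpa using h1
  have hbase : Stmt10Aux.Fam A m u v dfun :=
    ⟨hdpos, fun j => (hP j).2.1, fun j => (hP j).2.2,
      fun j k => (horth j k).1, fun j k => (horth j k).2, hnorm⟩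
  obtain ⟨u', v', d', hfam, hpre⟩ := Stmt10Aux.fam_build A hA hbase n hmn le_rfl
  have hEx : ∃ d : Fin n → ℝ, Monotone d ∧ (∀ i, 0 < d i) ∧
      ∃ M : Mat n, Mᵀ * symplJ n * M = symplJ n ∧
        Mᵀ * A * M = Matrix.fromBlocks (Matrix.diagonal d) 0 0 (Matrix.diagonal d) :=
    Stmt10Aux.williamson_ex A hfam
  have hsE : symplEig A = hEx.choose := dif_pos hEx
  obtain ⟨hmono, hpos, M, hMJ, hMA⟩ := hEx.choose_spec
  obtain ⟨hd', he1, he2, huu, hvv, huv⟩ := hfam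
  have hu'0 : ∀ j : Fin n, u' j ≠ 0 := by
    intro j h
    have h1 := huv j j
    rw [h, if_pos rfl] at h1
    simp [zero_dotProduct] at h1
  refine ⟨u', v', fun j => hpre hmn j, fun j k => ⟨huu j k, hvv j k⟩, huv, ?_⟩
  intro j
  refine ⟨Or.inl (hu'0 j), d' j, ?_, he1 j, he2 j⟩
  obtain ⟨i, hi⟩ := Stmt10Aux.eig_identify A hpos hMJ hMA (hd' j) (hu'0 j) (he1 j) (he2 j)
  exact ⟨i, by rw [hsE]; exact hi⟩
end

section
/- Let A be a 2n×2n real positive definite matrix, m ≤ n a positive integer, and S ∈ Sp(2n,2m,A). Then −SSᵀ belongs to the Fenchel subdifferential of σ_m at A; that is, ⟨−SSᵀ, H − A⟩ ≤ σ_m(H) − σ_m(A) for every H ∈ S(2n). -/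
open Filter Matrix Topology
open scoped Classical

set_option maxHeartbeats 1600000

namespace Stmt16Aux

open Complex Finset

variable {n m : ℕ}

/-! ### Entries of the symplectic form matrix -/

lemma symplJ_ll (j k : Fin n) : symplJ n (Sum.inl j) (Sum.inl k) = 0 := by
  simp [symplJ]

lemma symplJ_rr (j k : Fin n) : symplJ n (Sum.inr j) (Sum.inr k) = 0 := by
  simp [symplJ]

lemma symplJ_lr (j k : Fin n) : symplJ n (Sum.inl j) (Sum.inr k) = if j = k then 1 else 0 := by
  simp [symplJ, Matrix.one_apply]

lemma symplJ_rl (j k : Fin n) : symplJ n (Sum.inr j) (Sum.inl k) = if j = k then -1 else 0 := by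
  have h : symplJ n (Sum.inr j) (Sum.inl k) = -(if j = k then 1 else 0) := by
    simp [symplJ, Matrix.one_apply]
  rw [h]; split <;> simp

lemma symplJ_mul_inl (T : MatR n m) (k : Fin n) (c : Fin m ⊕ Fin m) :
    (symplJ n * T) (Sum.inl k) c = T (Sum.inr k) c := by
  rw [Matrix.mul_apply, Fintype.sum_sum_type]
  simp [symplJ_ll, symplJ_lr, ite_mul]

lemma symplJ_mul_inr (T : MatR n m) (k : Fin n) (c : Fin m ⊕ Fin m) :
    (symplJ n * T) (Sum.inr k) c = -T (Sum.inl k) c := by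
  rw [Matrix.mul_apply, Fintype.sum_sum_type]
  simp [symplJ_rr, symplJ_rl, ite_mul]

lemma TJT_entry (T : MatR n m) (c c' : Fin m ⊕ Fin m) :
    (Tᵀ * symplJ n * T) c c' =
      ∑ k : Fin n, (T (Sum.inl k) c * T (Sum.inr k) c'
        - T (Sum.inr k) c * T (Sum.inl k) c') := by
  rw [Matrix.mul_assoc, Matrix.mul_apply, Fintype.sum_sum_type]
  simp only [Matrix.transpose_apply, symplJ_mul_inl, symplJ_mul_inr]
  rw [← Finset.sum_add_distrib]
  exact Finset.sum_congr rfl fun k _ => by ring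

lemma entry_dot (B : Mat n) (X : MatR n m) (c c' : Fin m ⊕ Fin m) :
    (Xᵀ * B * X) c c' = (fun i => X i c) ⬝ᵥ (B *ᵥ fun i => X i c') := by
  rw [Matrix.mul_assoc]
  simp [Matrix.mul_apply, Matrix.mulVec, dotProduct]

lemma symplJ_mul_symplJ : symplJ n * symplJ n = -1 := by
  ext i j
  cases i with
  | inl k =>
    rw [symplJ_mul_inl (symplJ n) k j]
    cases j with
    | inl k' =>
      rw [symplJ_rl, Matrix.neg_apply, Matrix.one_apply]
      by_cases h : k = k' <;> simp [h]
    | inr k' =>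
      rw [symplJ_rr, Matrix.neg_apply, Matrix.one_apply]
      simp
  | inr k =>
    rw [symplJ_mul_inr (symplJ n) k j]
    cases j with
    | inl k' =>
      rw [symplJ_ll, Matrix.neg_apply, Matrix.one_apply]
      simp
    | inr k' =>
      rw [symplJ_lr, Matrix.neg_apply, Matrix.one_apply]
      by_cases h : k = k' <;> simp [h]

lemma isUnit_symplJ_det : IsUnit (symplJ n).det :=
  Matrix.isUnit_det_of_right_inverse (B := -(symplJ n))
    (by rw [Matrix.mul_neg, symplJ_mul_symplJ, neg_neg])

/-! ### The A-side trace identity -/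

lemma trace_A_eq (A : Mat n) (S : MatR n m) (hS : InSpA n m A S) :
    (Sᵀ * A * S).trace = 2 * ∑ j : Fin m, sEig A ((j : ℕ) + 1) := by
  have hS1 : Sᵀ * symplJ n * S = symplJ m := hS.1
  have pairing : ∀ c c', (fun i => S i c) ⬝ᵥ (symplJ n *ᵥ fun i => S i c') = symplJ m c c' := by
    intro c c'
    rw [← entry_dot, hS1]
  have h1 : ∀ j : Fin m, (Sᵀ * A * S) (Sum.inl j) (Sum.inl j) = sEig A ((j : ℕ) + 1) := by
    intro j
    rw [entry_dot, (hS.2 j).1, dotProduct_smul, pairing, symplJ_lr, if_pos rfl,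
      smul_eq_mul, mul_one]
  have h2 : ∀ j : Fin m, (Sᵀ * A * S) (Sum.inr j) (Sum.inr j) = sEig A ((j : ℕ) + 1) := by
    intro j
    rw [entry_dot, (hS.2 j).2, dotProduct_smul, pairing, symplJ_rl, if_pos rfl, smul_eq_mul]
    ring
  rw [show (Sᵀ * A * S).trace = ∑ c, (Sᵀ * A * S) c c from rfl, Fintype.sum_sum_type]
  simp only [h1, h2]
  ring

lemma trace_nonneg_of_psd (H : Mat n) (hH : H.PosSemidef) (T : MatR n m) :
    0 ≤ (Tᵀ * H * T).trace := by
  rw [show (Tᵀ * H * T).trace = ∑ c, (Tᵀ * H * T) c c from rfl]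
  apply Finset.sum_nonneg
  intro c _
  rw [entry_dot]
  simpa using hH.dotProduct_mulVec_nonneg (fun i => T i c)

/-! ### The complexification -/

/-- The complex matrix `Z` with `Z k c = T (inl k) c + T (inr k) c * I`. -/
noncomputable def Zc (T : MatR n m) : Matrix (Fin n) (Fin m ⊕ Fin m) ℂ :=
  fun k c => (T (Sum.inl k) c : ℂ) + (T (Sum.inr k) c : ℂ) * Complex.I

lemma gram (T : MatR n m) (hT : Tᵀ * symplJ n * T = symplJ m) (c c' : Fin m ⊕ Fin m) :
    (∑ k, (starRingEnd ℂ) (Zc T k c) * Zc T k c')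
      - (starRingEnd ℂ) (∑ k, (starRingEnd ℂ) (Zc T k c) * Zc T k c')
      = 2 * Complex.I * ((symplJ m c c' : ℝ) : ℂ) := by
  have h : (Tᵀ * symplJ n * T) c c' = symplJ m c c' := by rw [hT]
  rw [TJT_entry] at h
  rw [← h, _root_.map_sum, ← Finset.sum_sub_distrib]
  push_cast
  rw [Finset.mul_sum]
  apply Finset.sum_congr rfl
  intro k _
  simp only [Zc, _root_.map_add, _root_.map_mul, _root_.map_neg, Complex.conj_ofReal,
    Complex.conj_I, Complex.conj_conj, neg_neg]
  ring

/-- The key per-vector inequality. -/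
lemma keyVec (T : MatR n m) (hT : Tᵀ * symplJ n * T = symplJ m)
    (v : Fin m ⊕ Fin m → ℂ) (hv : ∀ j, v (Sum.inr j) = -Complex.I * v (Sum.inl j)) :
    2 * ∑ c, Complex.normSq (v c) ≤ ∑ k, Complex.normSq ((Zc T *ᵥ v) k) := by
  classical
  set Z := Zc T with hZ
  set g : (Fin m ⊕ Fin m) → (Fin m ⊕ Fin m) → ℂ :=
    fun c c' => ∑ k, (starRingEnd ℂ) (Z k c) * Z k c' with hg
  set Zb : Matrix (Fin n) (Fin m ⊕ Fin m) ℂ := fun k c => (starRingEnd ℂ) (Z k c) with hZb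
  have hgram : ∀ c c', (starRingEnd ℂ) (g c c')
      = g c c' - 2 * Complex.I * ((symplJ m c c' : ℝ) : ℂ) := by
    intro c c'
    have h := gram T hT c c'
    simp only [hg]
    linear_combination -h
  have E1 : ∑ k, (Z *ᵥ v) k * (starRingEnd ℂ) ((Z *ᵥ v) k)
      = ∑ c, ∑ c', (v c * (starRingEnd ℂ) (v c')) * (starRingEnd ℂ) (g c c') := by
    have e : ∀ k, (Z *ᵥ v) k * (starRingEnd ℂ) ((Z *ᵥ v) k)
        = ∑ c, ∑ c', (Z k c * v c) * ((starRingEnd ℂ) (Z k c') * (starRingEnd ℂ) (v c')) := by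
      intro k
      rw [show (Z *ᵥ v) k = ∑ c, Z k c * v c from rfl, _root_.map_sum, Finset.sum_mul_sum]
      apply Finset.sum_congr rfl
      intro c _
      apply Finset.sum_congr rfl
      intro c' _
      rw [_root_.map_mul]
    rw [Finset.sum_congr rfl fun k _ => e k, Finset.sum_comm]
    apply Finset.sum_congr rfl
    intro c _
    rw [Finset.sum_comm]
    apply Finset.sum_congr rfl
    intro c' _
    rw [hg, _root_.map_sum, Finset.mul_sum]
    apply Finset.sum_congr rfl
    intro k _
    rw [_root_.map_mul, Complex.conj_conj]
    ring
  have E2 : ∑ k, (Zb *ᵥ v) k * (starRingEnd ℂ) ((Zb *ᵥ v) k)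
      = ∑ c, ∑ c', (v c * (starRingEnd ℂ) (v c')) * g c c' := by
    have e : ∀ k, (Zb *ᵥ v) k * (starRingEnd ℂ) ((Zb *ᵥ v) k)
        = ∑ c, ∑ c', (Zb k c * v c) * ((starRingEnd ℂ) (Zb k c') * (starRingEnd ℂ) (v c')) := by
      intro k
      rw [show (Zb *ᵥ v) k = ∑ c, Zb k c * v c from rfl, _root_.map_sum, Finset.sum_mul_sum]
      apply Finset.sum_congr rfl
      intro c _
      apply Finset.sum_congr rfl
      intro c' _
      rw [_root_.map_mul]
    rw [Finset.sum_congr rfl fun k _ => e k, Finset.sum_comm]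
    apply Finset.sum_congr rfl
    intro c _
    rw [Finset.sum_comm]
    apply Finset.sum_congr rfl
    intro c' _
    rw [hg, Finset.mul_sum]
    apply Finset.sum_congr rfl
    intro k _
    simp only [hZb, Complex.conj_conj]
    ring
  have EJ : ∑ c, ∑ c', (v c * (starRingEnd ℂ) (v c')) * ((symplJ m c c' : ℝ) : ℂ)
      = 2 * Complex.I * ∑ j, (v (Sum.inl j) * (starRingEnd ℂ) (v (Sum.inl j))) := by
    rw [Fintype.sum_sum_type]
    have inner1 : ∀ j : Fin m,
        ∑ c', (v (Sum.inl j) * (starRingEnd ℂ) (v c')) * ((symplJ m (Sum.inl j) c' : ℝ) : ℂ)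
        = Complex.I * (v (Sum.inl j) * (starRingEnd ℂ) (v (Sum.inl j))) := by
      intro j
      rw [Fintype.sum_sum_type]
      simp only [symplJ_ll, symplJ_lr, Complex.ofReal_zero, mul_zero, Finset.sum_const_zero,
        zero_add, apply_ite Complex.ofReal, Complex.ofReal_one, mul_ite, mul_one,
        Finset.sum_ite_eq, Finset.mem_univ, if_true]
      rw [hv j, _root_.map_mul, _root_.map_neg, Complex.conj_I]
      ring
    have inner2 : ∀ j : Fin m,
        ∑ c', (v (Sum.inr j) * (starRingEnd ℂ) (v c')) * ((symplJ m (Sum.inr j) c' : ℝ) : ℂ)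
        = Complex.I * (v (Sum.inl j) * (starRingEnd ℂ) (v (Sum.inl j))) := by
      intro j
      rw [Fintype.sum_sum_type]
      simp only [symplJ_rl, symplJ_rr, Complex.ofReal_zero, mul_zero, Finset.sum_const_zero,
        add_zero, apply_ite Complex.ofReal, Complex.ofReal_one, Complex.ofReal_neg, mul_ite,
        mul_one, mul_neg, Finset.sum_ite_eq, Finset.mem_univ, if_true]
      rw [hv j]
      ring
    rw [Finset.sum_congr rfl fun j _ => inner1 j, Finset.sum_congr rfl fun j _ => inner2 j,
      ← Finset.sum_add_distrib, Finset.mul_sum]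
    apply Finset.sum_congr rfl
    intro j _
    ring
  have step : ∑ c, ∑ c', (v c * (starRingEnd ℂ) (v c')) * (starRingEnd ℂ) (g c c')
      = ∑ c, ∑ c', (v c * (starRingEnd ℂ) (v c')) * g c c'
        + 4 * ∑ j, (v (Sum.inl j) * (starRingEnd ℂ) (v (Sum.inl j))) := by
    have e : ∀ c c', (v c * (starRingEnd ℂ) (v c')) * (starRingEnd ℂ) (g c c')
        = (v c * (starRingEnd ℂ) (v c')) * g c c'
          - 2 * Complex.I * ((v c * (starRingEnd ℂ) (v c')) * ((symplJ m c c' : ℝ) : ℂ)) := by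
      intro c c'
      rw [hgram]
      ring
    simp only [e]
    rw [Finset.sum_congr rfl fun c _ => Finset.sum_sub_distrib _ _, Finset.sum_sub_distrib]
    simp only [← Finset.mul_sum]
    rw [EJ]
    set q := ∑ j, (v (Sum.inl j) * (starRingEnd ℂ) (v (Sum.inl j))) with hq
    linear_combination (-4 : ℂ) * q * Complex.I_sq
  have hv_total : ∑ c, (v c * (starRingEnd ℂ) (v c))
      = 2 * ∑ j, (v (Sum.inl j) * (starRingEnd ℂ) (v (Sum.inl j))) := by
    rw [Fintype.sum_sum_type]
    have e : ∀ j, v (Sum.inr j) * (starRingEnd ℂ) (v (Sum.inr j))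
        = v (Sum.inl j) * (starRingEnd ℂ) (v (Sum.inl j)) := by
      intro j
      rw [hv j, _root_.map_mul, _root_.map_neg, Complex.conj_I]
      linear_combination (-(v (Sum.inl j) * (starRingEnd ℂ) (v (Sum.inl j)))) * Complex.I_sq
    rw [Finset.sum_congr rfl fun j _ => e j]
    ring
  have mainC : ∑ k, (Z *ᵥ v) k * (starRingEnd ℂ) ((Z *ᵥ v) k)
      = ∑ k, (Zb *ᵥ v) k * (starRingEnd ℂ) ((Zb *ᵥ v) k)
        + 2 * ∑ c, (v c * (starRingEnd ℂ) (v c)) := by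
    rw [E1, E2, step, hv_total]
    ring
  have mainR : ((∑ k, Complex.normSq ((Z *ᵥ v) k) : ℝ) : ℂ)
      = ((∑ k, Complex.normSq ((Zb *ᵥ v) k) + 2 * ∑ c, Complex.normSq (v c) : ℝ) : ℂ) := by
    push_cast
    simp only [← Complex.mul_conj]
    exact mainC
  have hreal := Complex.ofReal_inj.mp mainR
  have hb : 0 ≤ ∑ k, Complex.normSq ((Zb *ᵥ v) k) :=
    Finset.sum_nonneg fun _ _ => Complex.normSq_nonneg _
  linarith



lemma tail_bound (hmn : m ≤ n) (T : MatR n m) (hT : Tᵀ * symplJ n * T = symplJ m)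
    (τ : ℕ) (hτ : τ ≤ m) :
    2 * ((m : ℝ) - τ) ≤ ∑ k ∈ Finset.univ.filter (fun k : Fin n => τ ≤ (k : ℕ)),
      ∑ c, ((T (Sum.inl k) c) ^ 2 + (T (Sum.inr k) c) ^ 2) := by
  classical
  set Z := Zc T with hZdef
  set Wm : Matrix {k : Fin n // (k : ℕ) < τ} (Fin m) ℂ :=
    fun ρ j => Z ρ.1 (Sum.inl j) - Complex.I * Z ρ.1 (Sum.inr j) with hWm
  set L : EuclideanSpace ℂ (Fin m) →ₗ[ℂ] ({k : Fin n // (k : ℕ) < τ} → ℂ) :=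
    Wm.mulVecLin ∘ₗ (WithLp.linearEquiv 2 ℂ (Fin m → ℂ)).toLinearMap with hL
  have hcard : Fintype.card {k : Fin n // (k : ℕ) < τ} = τ := by
    have e : {k : Fin n // (k : ℕ) < τ} ≃ Fin τ :=
      { toFun := fun k => ⟨k.1, k.2⟩
        invFun := fun j => ⟨⟨j.1, lt_of_lt_of_le j.2 (le_trans hτ hmn)⟩, j.2⟩
        left_inv := fun k => rfl
        right_inv := fun j => rfl }
    rw [Fintype.card_congr e, Fintype.card_fin]
  have hrank : m ≤ Module.finrank ℂ (LinearMap.ker L) + τ := by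
    have h1 := LinearMap.finrank_range_add_finrank_ker L
    rw [finrank_euclideanSpace, Fintype.card_fin] at h1
    have h2 : Module.finrank ℂ (LinearMap.range L) ≤ τ := by
      calc Module.finrank ℂ (LinearMap.range L)
          ≤ Module.finrank ℂ ({k : Fin n // (k : ℕ) < τ} → ℂ) := Submodule.finrank_le _
        _ = τ := by rw [Module.finrank_pi, hcard]
    omega
  let p := Module.finrank ℂ (LinearMap.ker L)
  let b := stdOrthonormalBasis ℂ (LinearMap.ker L)
  let x : Fin p → EuclideanSpace ℂ (Fin m) :=
    fun i => ((b i : LinearMap.ker L) : EuclideanSpace ℂ (Fin m))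
  have hxinner : ∀ i i' : Fin p,
      (∑ j, (starRingEnd ℂ) (x i j) * x i' j) = if i = i' then 1 else 0 := by
    intro i i'
    have h := orthonormal_iff_ite.mp b.orthonormal i i'
    rw [Submodule.coe_inner] at h
    rw [← h, PiLp.inner_apply]
    apply Finset.sum_congr rfl
    intro j _
    rw [RCLike.inner_apply']
  have hxker : ∀ i : Fin p, Wm *ᵥ (fun j => x i j) = 0 := by
    intro i
    have h : L (x i) = 0 := LinearMap.mem_ker.mp (b i).2
    exact h
  set s : ℝ := (Real.sqrt 2)⁻¹ with hs
  have hs2 : s ^ 2 = 1 / 2 := by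
    rw [hs, inv_pow, Real.sq_sqrt (by norm_num : (2:ℝ) ≥ 0)]
    norm_num
  have hsc : ((s : ℂ)) ^ 2 * 2 = 1 := by
    have h : ((s ^ 2 : ℝ) : ℂ) = ((1 / 2 : ℝ) : ℂ) := by rw [hs2]
    push_cast at h
    linear_combination 2 * h
  let v : Fin p → (Fin m ⊕ Fin m → ℂ) := fun i =>
    Sum.elim (fun j => (s : ℂ) * x i j) (fun j => -Complex.I * ((s : ℂ) * x i j))
  have hvr : ∀ (i : Fin p) (j : Fin m), v i (Sum.inr j) = -Complex.I * v i (Sum.inl j) :=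
    fun i j => rfl
  let V : Matrix (Fin m ⊕ Fin m) (Fin p) ℂ := fun c i => v i c
  have hVV : Vᴴ * V = 1 := by
    ext i i'
    rw [Matrix.mul_apply, Fintype.sum_sum_type, Matrix.one_apply, ← hxinner i i']
    simp only [Matrix.conjTranspose_apply]
    simp only [Matrix.conjTranspose_apply, V, v, Sum.elim_inl, Sum.elim_inr, Complex.star_def,
      _root_.map_mul, _root_.map_neg, Complex.conj_I, Complex.conj_ofReal]
    rw [← Finset.sum_add_distrib]
    apply Finset.sum_congr rfl
    intro j _
    linear_combination ((starRingEnd ℂ) (x i j) * x i' j) * hsc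
      - (s : ℂ) ^ 2 * ((starRingEnd ℂ) (x i j) * x i' j) * Complex.I_sq
  have hvnorm : ∀ i : Fin p, ∑ c, Complex.normSq (v i c) = 1 := by
    intro i
    have h := hxinner i i
    rw [if_pos rfl] at h
    have hns : ∑ j, (Complex.normSq (x i j) : ℂ) = 1 := by
      rw [← h]
      apply Finset.sum_congr rfl
      intro j _
      rw [mul_comm ((starRingEnd ℂ) (x i j)) (x i j), Complex.mul_conj]
    have hnsr : ∑ j, Complex.normSq (x i j) = 1 := by exact_mod_cast hns
    rw [Fintype.sum_sum_type]
    simp only [v, Sum.elim_inl, Sum.elim_inr, Complex.normSq_mul, Complex.normSq_neg,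
      Complex.normSq_I, Complex.normSq_ofReal, one_mul]
    rw [← Finset.mul_sum, hnsr]
    nlinarith [hs2]
  have hkerZ : ∀ (i : Fin p) (k : Fin n), (k : ℕ) < τ → (Z *ᵥ v i) k = 0 := by
    intro i k hk
    have h0 : (Wm *ᵥ fun j => x i j) ⟨k, hk⟩ = 0 := by rw [hxker i]; rfl
    have e : (Z *ᵥ v i) k = (s : ℂ) * (Wm *ᵥ fun j => x i j) ⟨k, hk⟩ := by
      rw [show (Z *ᵥ v i) k = ∑ c, Z k c * v i c from rfl,
        show (Wm *ᵥ fun j => x i j) ⟨k, hk⟩ = ∑ j, Wm ⟨k, hk⟩ j * x i j from rfl,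
        Fintype.sum_sum_type, Finset.mul_sum, ← Finset.sum_add_distrib]
      apply Finset.sum_congr rfl
      intro j _
      simp only [v, Sum.elim_inl, Sum.elim_inr, Wm]
      ring
    rw [e, h0, mul_zero]
  let Y : Matrix (Fin n) (Fin m ⊕ Fin m) ℂ := fun k c => if τ ≤ (k : ℕ) then Z k c else 0
  have hYv : ∀ i : Fin p, Y *ᵥ v i = Z *ᵥ v i := by
    intro i
    funext k
    by_cases hk : τ ≤ (k : ℕ)
    · show ∑ c, Y k c * v i c = ∑ c, Z k c * v i c
      apply Finset.sum_congr rfl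
      intro c _
      simp only [Y, if_pos hk]
    · have h1 : (Y *ᵥ v i) k = 0 := by
        show ∑ c, Y k c * v i c = 0
        apply Finset.sum_eq_zero
        intro c _
        simp only [Y, if_neg hk, zero_mul]
      rw [h1, hkerZ i k (by omega)]
  let P : Matrix (Fin m ⊕ Fin m) (Fin m ⊕ Fin m) ℂ := V * Vᴴ
  have hPP : P * P = P := by
    show V * Vᴴ * (V * Vᴴ) = V * Vᴴ
    rw [Matrix.mul_assoc, ← Matrix.mul_assoc Vᴴ V Vᴴ, hVV, Matrix.one_mul]
  let Q : Matrix (Fin m ⊕ Fin m) (Fin m ⊕ Fin m) ℂ := 1 - P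
  have hQh : Qᴴ = Q := by
    show (1 - V * Vᴴ)ᴴ = 1 - V * Vᴴ
    rw [Matrix.conjTranspose_sub, Matrix.conjTranspose_one, Matrix.conjTranspose_mul,
      Matrix.conjTranspose_conjTranspose]
  have hQQ : Q * Q = Q := by
    show (1 - P) * (1 - P) = 1 - P
    rw [Matrix.sub_mul, Matrix.one_mul, Matrix.mul_sub, Matrix.mul_one, hPP, sub_self, sub_zero]
  have tsplit : (Yᴴ * Y).trace = ((Y * V)ᴴ * (Y * V)).trace + ((Y * Q)ᴴ * (Y * Q)).trace := by
    have e1 : ((Y * V)ᴴ * (Y * V)).trace = (Yᴴ * Y * P).trace := by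
      rw [Matrix.conjTranspose_mul]
      rw [show Vᴴ * Yᴴ * (Y * V) = Vᴴ * (Yᴴ * Y * V) by simp only [Matrix.mul_assoc]]
      rw [Matrix.trace_mul_comm]
      rw [show Yᴴ * Y * V * Vᴴ = Yᴴ * Y * (V * Vᴴ) by simp only [Matrix.mul_assoc]]
    have e2 : ((Y * Q)ᴴ * (Y * Q)).trace = (Yᴴ * Y * Q).trace := by
      rw [Matrix.conjTranspose_mul, hQh]
      rw [show Q * Yᴴ * (Y * Q) = Q * (Yᴴ * Y * Q) by simp only [Matrix.mul_assoc]]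
      rw [Matrix.trace_mul_comm]
      rw [show Yᴴ * Y * Q * Q = Yᴴ * Y * (Q * Q) by simp only [Matrix.mul_assoc], hQQ]
    rw [e1, e2, ← Matrix.trace_add, ← Matrix.mul_add]
    rw [show P + Q = 1 from by show P + (1 - P) = 1; rw [add_sub_cancel]]
    rw [Matrix.mul_one]
  have frob : ∀ {α β : Type} [Fintype α] [Fintype β] (X : Matrix α β ℂ),
      (Xᴴ * X).trace = ∑ c : β, ∑ k : α, (Complex.normSq (X k c) : ℂ) := by
    intro α β _ _ X
    rw [show (Xᴴ * X).trace = ∑ c, (Xᴴ * X) c c from rfl]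
    apply Finset.sum_congr rfl
    intro c _
    rw [Matrix.mul_apply]
    apply Finset.sum_congr rfl
    intro k _
    rw [Matrix.conjTranspose_apply, Complex.star_def, mul_comm, Complex.mul_conj]
  have treal : (∑ c, ∑ k, Complex.normSq (Y k c))
      = (∑ i, ∑ k, Complex.normSq ((Y * V) k i)) + (∑ c, ∑ k, Complex.normSq ((Y * Q) k c)) := by
    have h := tsplit
    rw [frob Y, frob (Y * V), frob (Y * Q)] at h
    exact_mod_cast h
  have hYV : ∀ (i : Fin p) (k : Fin n), (Y * V) k i = (Z *ᵥ v i) k := by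
    intro i k
    rw [← hYv i]
    rfl
  have hlow : 2 * (p : ℝ) ≤ ∑ i, ∑ k, Complex.normSq ((Y * V) k i) := by
    have hone : ∀ i : Fin p, 2 ≤ ∑ k, Complex.normSq ((Y * V) k i) := by
      intro i
      have hk := keyVec T hT (v i) (hvr i)
      rw [hvnorm i] at hk
      calc (2 : ℝ) = 2 * 1 := by ring
        _ ≤ ∑ k, Complex.normSq ((Zc T *ᵥ v i) k) := by simpa using hk
        _ = ∑ k, Complex.normSq ((Y * V) k i) := by
            apply Finset.sum_congr rfl
            intro k _
            rw [hYV i k]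
    calc 2 * (p : ℝ) = ∑ _i : Fin p, (2 : ℝ) := by
          rw [Finset.sum_const, Finset.card_univ, Fintype.card_fin, nsmul_eq_mul]; ring
      _ ≤ _ := Finset.sum_le_sum fun i _ => hone i
  have hQnn : 0 ≤ ∑ c, ∑ k, Complex.normSq ((Y * Q) k c) :=
    Finset.sum_nonneg fun _ _ => Finset.sum_nonneg fun _ _ => Complex.normSq_nonneg _
  have hYsum : ∑ c, ∑ k, Complex.normSq (Y k c)
      = ∑ k ∈ Finset.univ.filter (fun k : Fin n => τ ≤ (k : ℕ)),
          ∑ c, ((T (Sum.inl k) c) ^ 2 + (T (Sum.inr k) c) ^ 2) := by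
    rw [Finset.sum_comm, Finset.sum_filter]
    apply Finset.sum_congr rfl
    intro k _
    by_cases hk : τ ≤ (k : ℕ)
    · rw [if_pos hk]
      apply Finset.sum_congr rfl
      intro c _
      simp only [Y, if_pos hk, hZdef, Zc]
      exact Complex.normSq_add_mul_I _ _
    · rw [if_neg hk]
      apply Finset.sum_eq_zero
      intro c _
      simp [Y, if_neg hk]
  have hcast : (m : ℝ) - τ ≤ (p : ℝ) := by
    have h : (m : ℝ) ≤ (p : ℝ) + (τ : ℝ) := by exact_mod_cast hrank
    linarith
  linarith [hlow, hQnn, treal, hYsum.symm]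

lemma abel_ineq (hm1 : 1 ≤ m) (hmn : m ≤ n) (d w : Fin n → ℝ)
    (hmono : Monotone d) (hpos : ∀ i, 0 < d i) (hwnn : ∀ k, 0 ≤ w k)
    (htail : ∀ t : ℕ, t ≤ m →
      2 * ((m : ℝ) - t) ≤ ∑ k ∈ Finset.univ.filter (fun k : Fin n => t ≤ (k : ℕ)), w k) :
    2 * ∑ t ∈ Finset.range m, (if h : t < n then d ⟨t, h⟩ else 0) ≤ ∑ k : Fin n, d k * w k := by
  classical
  have hn1 : 1 ≤ n := le_trans hm1 hmn
  set f : ℕ → ℝ := fun t => if ht : t = 0 then 0 else d ⟨min (t - 1) (n - 1), by omega⟩ with hf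
  have hf0 : f 0 = 0 := by simp [hf]
  have hfmono : Monotone f := by
    intro a b hab
    rcases Nat.eq_zero_or_pos a with ha | ha
    · subst ha
      by_cases hb : b = 0
      · subst hb; exact le_refl _
      · rw [hf0]
        simp only [hf, dif_neg hb]
        exact le_of_lt (hpos _)
    · have ha0 : a ≠ 0 := by omega
      have hb0 : b ≠ 0 := by omega
      simp only [hf, dif_neg ha0, dif_neg hb0]
      apply hmono
      rw [Fin.mk_le_mk]
      exact min_le_min (by omega) le_rfl
  set δ : ℕ → ℝ := fun t => f (t + 1) - f t with hδ
  have hδnn : ∀ t, 0 ≤ δ t := fun t => sub_nonneg.mpr (hfmono (Nat.le_succ t))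
  have hsum_δ : ∀ k : ℕ, ∑ t ∈ Finset.range (k + 1), δ t = f (k + 1) := by
    intro k
    simp only [hδ]
    rw [Finset.sum_range_sub f, hf0, sub_zero]
  have hfd : ∀ (t : ℕ) (h : t < n), f (t + 1) = d ⟨t, h⟩ := by
    intro t h
    simp only [hf, dif_neg (Nat.succ_ne_zero t)]
    congr 1
    apply Fin.ext
    simp only [Nat.add_sub_cancel]
    omega
  have expand : ∑ k : Fin n, d k * w k = ∑ t ∈ Finset.range n, δ t *
      (∑ k ∈ Finset.univ.filter (fun k : Fin n => t ≤ (k : ℕ)), w k) := by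
    have e1 : ∀ k : Fin n, d k * w k
        = ∑ t ∈ Finset.range n, (if t ≤ (k : ℕ) then δ t * w k else 0) := by
      intro k
      rw [← Finset.sum_filter]
      rw [show (Finset.range n).filter (fun t => t ≤ (k : ℕ)) = Finset.range ((k : ℕ) + 1) from by
        ext t
        simp only [Finset.mem_filter, Finset.mem_range, Nat.lt_succ_iff]
        have := k.isLt
        omega]
      rw [← Finset.sum_mul, hsum_δ, hfd (k : ℕ) k.isLt, Fin.eta]
    rw [Finset.sum_congr rfl fun k _ => e1 k, Finset.sum_comm]
    apply Finset.sum_congr rfl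
    intro t _
    rw [← Finset.sum_filter, Finset.mul_sum]
  rw [expand]
  have bound : ∑ t ∈ Finset.range n, (if t < m then δ t * (2 * ((m : ℝ) - t)) else 0)
      ≤ ∑ t ∈ Finset.range n, δ t *
        (∑ k ∈ Finset.univ.filter (fun k : Fin n => t ≤ (k : ℕ)), w k) := by
    apply Finset.sum_le_sum
    intro t _
    by_cases htm : t < m
    · rw [if_pos htm]
      exact mul_le_mul_of_nonneg_left (htail t (le_of_lt htm)) (hδnn t)
    · rw [if_neg htm]
      exact mul_nonneg (hδnn t) (Finset.sum_nonneg fun k _ => hwnn k)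
  have ident : ∑ t ∈ Finset.range n, (if t < m then δ t * (2 * ((m : ℝ) - t)) else 0)
      = 2 * ∑ t ∈ Finset.range m, (if h : t < n then d ⟨t, h⟩ else 0) := by
    rw [← Finset.sum_filter]
    rw [show (Finset.range n).filter (fun t => t < m) = Finset.range m from by
      ext t
      simp only [Finset.mem_filter, Finset.mem_range]
      omega]
    have count : ∀ t ∈ Finset.range m,
        (m : ℝ) - t = ∑ s ∈ Finset.range m, (if t ≤ s then (1 : ℝ) else 0) := by
      intro t ht
      rw [Finset.sum_boole]
      rw [show (Finset.range m).filter (fun s => t ≤ s) = Finset.Ico t m from by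
        ext s
        simp only [Finset.mem_filter, Finset.mem_range, Finset.mem_Ico]
        omega]
      rw [Nat.card_Ico, Nat.cast_sub (le_of_lt (Finset.mem_range.mp ht))]
    have e2 : ∀ t ∈ Finset.range m, δ t * (2 * ((m : ℝ) - t))
        = 2 * ∑ s ∈ Finset.range m, (if t ≤ s then δ t else 0) := by
      intro t ht
      have hc : ∑ s ∈ Finset.range m, (if t ≤ s then δ t else 0) = δ t * ((m : ℝ) - t) := by
        rw [show (∑ s ∈ Finset.range m, (if t ≤ s then δ t else 0))
            = ∑ s ∈ Finset.range m, δ t * (if t ≤ s then (1 : ℝ) else 0) from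
          Finset.sum_congr rfl fun s _ => by split <;> simp]
        rw [← Finset.mul_sum, ← count t ht]
      rw [hc]
      ring
    rw [Finset.sum_congr rfl e2, ← Finset.mul_sum]
    congr 1
    rw [Finset.sum_comm]
    apply Finset.sum_congr rfl
    intro s hs
    have hsm : s < m := Finset.mem_range.mp hs
    rw [← Finset.sum_filter]
    rw [show (Finset.range m).filter (fun t => t ≤ s) = Finset.range (s + 1) from by
      ext t
      simp only [Finset.mem_filter, Finset.mem_range, Nat.lt_succ_iff]
      omega]
    rw [hsum_δ, dif_pos (lt_of_lt_of_le hsm hmn), hfd s (lt_of_lt_of_le hsm hmn)]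
  linarith [bound, ident]

lemma core (hm1 : 1 ≤ m) (hmn : m ≤ n) (d : Fin n → ℝ) (hmono : Monotone d)
    (hpos : ∀ i, 0 < d i) (T : MatR n m) (hT : Tᵀ * symplJ n * T = symplJ m) :
    2 * ∑ t ∈ Finset.range m, (if h : t < n then d ⟨t, h⟩ else 0) ≤
      (Tᵀ * Matrix.fromBlocks (Matrix.diagonal d) 0 0 (Matrix.diagonal d) * T).trace := by
  classical
  have hwnn : ∀ k : Fin n, 0 ≤ ∑ c, ((T (Sum.inl k) c) ^ 2 + (T (Sum.inr k) c) ^ 2) :=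
    fun k => Finset.sum_nonneg fun c _ => by positivity
  have hmv1 : ∀ (c : Fin m ⊕ Fin m) (k : Fin n),
      (Matrix.fromBlocks (Matrix.diagonal d) 0 0 (Matrix.diagonal d) *ᵥ fun i => T i c)
        (Sum.inl k) = d k * T (Sum.inl k) c := by
    intro c k
    show ∑ r, Matrix.fromBlocks (Matrix.diagonal d) 0 0 (Matrix.diagonal d) (Sum.inl k) r * T r c
      = _
    rw [Fintype.sum_sum_type]
    simp [Matrix.diagonal_apply, ite_mul, Finset.sum_ite_eq]
  have hmv2 : ∀ (c : Fin m ⊕ Fin m) (k : Fin n),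
      (Matrix.fromBlocks (Matrix.diagonal d) 0 0 (Matrix.diagonal d) *ᵥ fun i => T i c)
        (Sum.inr k) = d k * T (Sum.inr k) c := by
    intro c k
    show ∑ r, Matrix.fromBlocks (Matrix.diagonal d) 0 0 (Matrix.diagonal d) (Sum.inr k) r * T r c
      = _
    rw [Fintype.sum_sum_type]
    simp [Matrix.diagonal_apply, ite_mul, Finset.sum_ite_eq]
  have htr : (Tᵀ * Matrix.fromBlocks (Matrix.diagonal d) 0 0 (Matrix.diagonal d) * T).trace
      = ∑ k, d k * ∑ c, ((T (Sum.inl k) c) ^ 2 + (T (Sum.inr k) c) ^ 2) := by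
    rw [show (Tᵀ * Matrix.fromBlocks (Matrix.diagonal d) 0 0 (Matrix.diagonal d) * T).trace
      = ∑ c, (Tᵀ * Matrix.fromBlocks (Matrix.diagonal d) 0 0 (Matrix.diagonal d) * T) c c
      from rfl]
    have e : ∀ c, (Tᵀ * Matrix.fromBlocks (Matrix.diagonal d) 0 0 (Matrix.diagonal d) * T) c c
        = ∑ k, d k * ((T (Sum.inl k) c) ^ 2 + (T (Sum.inr k) c) ^ 2) := by
      intro c
      rw [entry_dot]
      show ∑ r, T r c *
        (Matrix.fromBlocks (Matrix.diagonal d) 0 0 (Matrix.diagonal d) *ᵥ fun i => T i c) r = _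
      rw [Fintype.sum_sum_type, ← Finset.sum_add_distrib]
      apply Finset.sum_congr rfl
      intro k _
      rw [hmv1 c k, hmv2 c k]
      ring
    rw [Finset.sum_congr rfl fun c _ => e c, Finset.sum_comm]
    apply Finset.sum_congr rfl
    intro k _
    rw [Finset.mul_sum]
  rw [htr]
  have htail : ∀ t : ℕ, t ≤ m →
      2 * ((m : ℝ) - t) ≤ ∑ k ∈ Finset.univ.filter (fun k : Fin n => t ≤ (k : ℕ)),
        ∑ c, ((T (Sum.inl k) c) ^ 2 + (T (Sum.inr k) c) ^ 2) := by
    intro t ht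
    exact tail_bound hmn T hT t ht
  exact abel_ineq hm1 hmn d
    (fun k => ∑ c, ((T (Sum.inl k) c) ^ 2 + (T (Sum.inr k) c) ^ 2)) hmono hpos hwnn htail

lemma key_ineq (hm1 : 1 ≤ m) (hmn : m ≤ n) (H : Mat n) (hH : H.PosDef) (T : MatR n m)
    (hT : Tᵀ * symplJ n * T = symplJ m) :
    2 * ∑ j ∈ Finset.Icc 1 m, sEig H j ≤ (Tᵀ * H * T).trace := by
  classical
  by_cases hwil : ∃ d : Fin n → ℝ, Monotone d ∧ (∀ i, 0 < d i) ∧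
      ∃ M : Mat n, Mᵀ * symplJ n * M = symplJ n ∧
        Mᵀ * H * M = Matrix.fromBlocks (Matrix.diagonal d) 0 0 (Matrix.diagonal d)
  · have hEig : symplEig H = hwil.choose := by
      unfold symplEig
      rw [dif_pos hwil]
    obtain ⟨hmono, hpos, M, hMJ, hMH⟩ := hwil.choose_spec
    set d : Fin n → ℝ := hwil.choose with hd
    have hdetM : IsUnit M.det := by
      have h := congrArg Matrix.det hMJ
      rw [Matrix.det_mul, Matrix.det_mul, Matrix.det_transpose] at h
      have hJ0 : (symplJ n).det ≠ 0 := isUnit_symplJ_det.ne_zero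
      rw [isUnit_iff_ne_zero]
      intro h0
      rw [h0, zero_mul, mul_zero] at h
      exact hJ0 h.symm
    have hdetMT : IsUnit Mᵀ.det := by rwa [Matrix.det_transpose]
    have cancel : ∀ X : Mat n, (Mᵀ)⁻¹ * (Mᵀ * X * M) * M⁻¹ = X := by
      intro X
      rw [Matrix.mul_assoc (Mᵀ) X M, ← Matrix.mul_assoc ((Mᵀ)⁻¹) (Mᵀ) (X * M),
        Matrix.nonsing_inv_mul _ hdetMT, Matrix.one_mul, Matrix.mul_assoc X M M⁻¹,
        Matrix.mul_nonsing_inv _ hdetM, Matrix.mul_one]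
    have hMiJ : (Mᵀ)⁻¹ * symplJ n * M⁻¹ = symplJ n := by
      conv_lhs => rw [← hMJ]
      exact cancel _
    have hHdec : (Mᵀ)⁻¹ * Matrix.fromBlocks (Matrix.diagonal d) 0 0 (Matrix.diagonal d) * M⁻¹
        = H := by
      rw [← hMH]
      exact cancel H
    set T' : MatR n m := M⁻¹ * T with hT'
    have hT'J : T'ᵀ * symplJ n * T' = symplJ m := by
      have e : T'ᵀ * symplJ n * T' = Tᵀ * ((Mᵀ)⁻¹ * symplJ n * M⁻¹) * T := by
        rw [hT', Matrix.transpose_mul, Matrix.transpose_nonsing_inv]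
        simp only [Matrix.mul_assoc]
      rw [e, hMiJ]
      exact hT
    have htr : (Tᵀ * H * T).trace
        = (T'ᵀ * Matrix.fromBlocks (Matrix.diagonal d) 0 0 (Matrix.diagonal d) * T').trace := by
      rw [← hHdec, hT', Matrix.transpose_mul, Matrix.transpose_nonsing_inv]
      simp only [Matrix.mul_assoc]
    have hsum : ∑ j ∈ Finset.Icc 1 m, sEig H j
        = ∑ t ∈ Finset.range m, (if h : t < n then d ⟨t, h⟩ else 0) := by
      rw [← Finset.Ico_add_one_right_eq_Icc, Finset.sum_Ico_eq_sum_range]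
      apply Finset.sum_congr rfl
      intro t ht
      have htm : t < m := Finset.mem_range.mp ht
      have htn : t < n := lt_of_lt_of_le htm hmn
      rw [dif_pos htn]
      unfold sEig
      rw [dif_pos (show 1 + t - 1 < n from by omega), hEig]
      congr 1
      exact Fin.ext (show 1 + t - 1 = t by omega)
    rw [hsum, htr]
    exact core hm1 hmn d hmono hpos T' hT'J
  · have hz : ∀ j, sEig H j = 0 := by
      intro j
      unfold sEig
      split
      · unfold symplEig
        rw [dif_neg hwil]
      · rfl
    calc 2 * ∑ j ∈ Finset.Icc 1 m, sEig H j = 0 := by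
          rw [Finset.sum_congr rfl fun j _ => hz j]
          simp
      _ ≤ _ := trace_nonneg_of_psd H hH.posSemidef T

end Stmt16Aux

theorem stmt16 {n m : ℕ} (hm1 : 1 ≤ m) (hmn : m ≤ n) (A : Mat n) (hA : A.PosDef)
    (S : MatR n m) (hS : InSpA n m A S) :
    ∀ H : Mat n, H.IsSymm →
      ((minner (-(S * Sᵀ)) (H - A) : ℝ) : EReal) ≤ sigmaE m H - sigmaE m A := by
  intro H _
  by_cases hH : H.PosDef
  · unfold sigmaE
    rw [if_pos hH, if_pos hA, ← EReal.coe_sub, EReal.coe_le_coe_iff]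
    have hAtr := Stmt16Aux.trace_A_eq A S hS
    have hkey := Stmt16Aux.key_ineq hm1 hmn H hH S hS.1
    have hAsum : ∑ j ∈ Finset.Icc 1 m, sEig A j = ∑ j : Fin m, sEig A ((j : ℕ) + 1) := by
      rw [← Finset.Ico_add_one_right_eq_Icc, Finset.sum_Ico_eq_sum_range]
      simp only [Nat.add_sub_cancel]
      rw [← Fin.sum_univ_eq_sum_range (fun i => sEig A (1 + i)) m]
      apply Finset.sum_congr rfl
      intro j _
      rw [Nat.add_comm]
    have hmin : minner (-(S * Sᵀ)) (H - A) = (Sᵀ * A * S).trace - (Sᵀ * H * S).trace := by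
      unfold minner
      rw [Matrix.neg_mul, Matrix.trace_neg, Matrix.mul_sub, Matrix.trace_sub]
      have c1 : (S * Sᵀ * H).trace = (Sᵀ * H * S).trace := by
        rw [Matrix.mul_assoc, Matrix.trace_mul_comm]
      have c2 : (S * Sᵀ * A).trace = (Sᵀ * A * S).trace := by
        rw [Matrix.mul_assoc, Matrix.trace_mul_comm]
      rw [c1, c2]
      ring
    rw [hmin]
    linarith [hkey, hAtr, hAsum]
  · unfold sigmaE
    rw [if_neg hH, if_pos hA, EReal.top_sub_coe]
    exact le_top
end

section
/- Let A be a 2n×2n real positive definite matrix and M ∈ Sp(2n,2n,A). Then the Frobenius norm of M satisfies ‖M‖_F² ≤ 2n·κ(A), where κ(A) = ‖A‖·‖A⁻¹‖ is the condition number of A with respect to the operator norm. -/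
open Filter Matrix Topology
open scoped Classical

lemma JtJ (n : ℕ) : (symplJ n)ᵀ * symplJ n = 1 := by
  simp [symplJ, Matrix.fromBlocks_transpose, Matrix.fromBlocks_multiply,
    ← Matrix.fromBlocks_one]

lemma Jdot (n : ℕ) (x : Fin n ⊕ Fin n → ℝ) :
    (symplJ n *ᵥ x) ⬝ᵥ (symplJ n *ᵥ x) = x ⬝ᵥ x := by
  calc (symplJ n *ᵥ x) ⬝ᵥ (symplJ n *ᵥ x)
      = (x ᵥ* (symplJ n)ᵀ) ⬝ᵥ (symplJ n *ᵥ x) := by rw [Matrix.vecMul_transpose]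
    _ = x ⬝ᵥ ((symplJ n)ᵀ *ᵥ (symplJ n *ᵥ x)) := (Matrix.dotProduct_mulVec _ _ _).symm
    _ = x ⬝ᵥ x := by rw [Matrix.mulVec_mulVec, JtJ, Matrix.one_mulVec]

lemma quad_le {n : ℕ} (B : Mat n) (x : Fin n ⊕ Fin n → ℝ) :
    x ⬝ᵥ (B *ᵥ x) ≤ opN B * (x ⬝ᵥ x) := by
  set e : EuclideanSpace ℝ (Fin n ⊕ Fin n) := (WithLp.equiv 2 _).symm x with he
  have h1 : x ⬝ᵥ (B *ᵥ x) = inner ℝ e (Matrix.toEuclideanCLM (𝕜 := ℝ) B e) := by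
    rw [he, WithLp.equiv_symm_apply, Matrix.toEuclideanCLM_toLp]
    simp [PiLp.inner_apply, dotProduct, he, mul_comm]
  have h2 : (x ⬝ᵥ x) = ‖e‖ ^ 2 := by
    rw [← real_inner_self_eq_norm_sq]
    rw [he, WithLp.equiv_symm_apply, PiLp.inner_apply]
    simp [dotProduct, sq]
  rw [h1, h2]
  calc inner ℝ e (Matrix.toEuclideanCLM (𝕜 := ℝ) B e)
      ≤ ‖e‖ * ‖Matrix.toEuclideanCLM (𝕜 := ℝ) B e‖ := real_inner_le_norm _ _
    _ ≤ ‖e‖ * (opN B * ‖e‖) := by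
        gcongr; exact (Matrix.toEuclideanCLM (𝕜 := ℝ) B).le_opNorm e
    _ = opN B * ‖e‖ ^ 2 := by ring

lemma dot_symm {n : ℕ} {A : Mat n} (hA : A.PosDef) (z w : Fin n ⊕ Fin n → ℝ) :
    z ⬝ᵥ A *ᵥ w = w ⬝ᵥ A *ᵥ z := by
  have hT : Aᵀ = A := by simpa using hA.isHermitian.eq
  rw [Matrix.dotProduct_mulVec]
  conv_lhs => rw [← hT, Matrix.vecMul_transpose]
  rw [dotProduct_comm]

lemma cs_posdef {n : ℕ} {A : Mat n} (hA : A.PosDef) (x y : Fin n ⊕ Fin n → ℝ) :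
    (x ⬝ᵥ A *ᵥ y) ^ 2 ≤ (x ⬝ᵥ A *ᵥ x) * (y ⬝ᵥ A *ᵥ y) := by
  have key : ∀ t : ℝ, 0 ≤ (x ⬝ᵥ A *ᵥ x) - 2 * t * (x ⬝ᵥ A *ᵥ y)
      + t ^ 2 * (y ⬝ᵥ A *ᵥ y) := by
    intro t
    have h0 := hA.posSemidef.dotProduct_mulVec_nonneg (x - t • y)
    have hexp : (star (x - t • y)) ⬝ᵥ A *ᵥ (x - t • y) =
        (x ⬝ᵥ A *ᵥ x) - 2 * t * (x ⬝ᵥ A *ᵥ y) + t ^ 2 * (y ⬝ᵥ A *ᵥ y) := by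
      have := dot_symm hA y x
      simp only [star_trivial, Matrix.mulVec_sub, Matrix.mulVec_smul,
        sub_dotProduct, dotProduct_sub, smul_dotProduct,
        dotProduct_smul, smul_eq_mul]
      rw [dot_symm hA y x]
      ring
    rw [hexp] at h0
    exact h0
  rcases eq_or_lt_of_le (hA.posSemidef.dotProduct_mulVec_nonneg y) with hc | hc
  · -- y ⬝ᵥ A *ᵥ y = 0, hence y = 0
    have hy : y = 0 := by
      by_contra hy
      exact absurd (hA.dotProduct_mulVec_pos hy) (by rw [← hc]; simp)
    simp [hy]
  · have h := key ((x ⬝ᵥ A *ᵥ y) / (y ⬝ᵥ A *ᵥ y))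
    have hc' : (0:ℝ) < y ⬝ᵥ A *ᵥ y := by simpa using hc
    rw [div_pow] at h
    have hcne : (y ⬝ᵥ A *ᵥ y) ≠ 0 := hc'.ne'
    field_simp at h
    rw [zero_mul] at h
    nlinarith [h, mul_pos hc' hc']

lemma opN_nonneg {n : ℕ} (A : Mat n) : 0 ≤ opN A := norm_nonneg _

lemma dot_self_nonneg {n : ℕ} (x : Fin n ⊕ Fin n → ℝ) : 0 ≤ x ⬝ᵥ x :=
  Finset.sum_nonneg fun i _ => mul_self_nonneg _

lemma key_ineq' {n : ℕ} {A : Mat n} (hA : A.PosDef) (x : Fin n ⊕ Fin n → ℝ) :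
    x ⬝ᵥ x ≤ opN A⁻¹ * (x ⬝ᵥ A *ᵥ x) := by
  have hAAinv : A * A⁻¹ = 1 := A.mul_nonsing_inv ((Matrix.isUnit_iff_isUnit_det A).mp hA.isUnit)
  have h1 : A *ᵥ (A⁻¹ *ᵥ x) = x := by
    rw [Matrix.mulVec_mulVec, hAAinv, Matrix.one_mulVec]
  have cs := cs_posdef hA x (A⁻¹ *ᵥ x)
  rw [h1] at cs
  have h2 : (A⁻¹ *ᵥ x) ⬝ᵥ x = x ⬝ᵥ (A⁻¹ *ᵥ x) := dotProduct_comm _ _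
  rw [h2] at cs
  have h3 : x ⬝ᵥ (A⁻¹ *ᵥ x) ≤ opN A⁻¹ * (x ⬝ᵥ x) := quad_le A⁻¹ x
  have ht : 0 ≤ x ⬝ᵥ x := dot_self_nonneg x
  have hq : 0 ≤ x ⬝ᵥ A *ᵥ x := by simpa using hA.posSemidef.dotProduct_mulVec_nonneg x
  rcases eq_or_lt_of_le ht with h0 | h0
  · rw [← h0]; exact mul_nonneg (opN_nonneg _) hq
  · nlinarith [mul_le_mul_of_nonneg_left h3 hq]

lemma one_col_bound {n : ℕ} {A : Mat n} (hA : A.PosDef) (x : Fin n ⊕ Fin n → ℝ) (d : ℝ)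
    (hd : 0 < d) (hκ : (1:ℝ) ≤ opN A * opN A⁻¹)
    (h1 : x ⬝ᵥ A *ᵥ x = d)
    (h2 : (symplJ n *ᵥ x) ⬝ᵥ (A⁻¹ *ᵥ (symplJ n *ᵥ x)) = 1 / d) :
    x ⬝ᵥ x ≤ opN A * opN A⁻¹ := by
  have hdet : IsUnit A.det := (Matrix.isUnit_iff_isUnit_det A).mp hA.isUnit
  have b1 : x ⬝ᵥ x ≤ opN A⁻¹ * d := by
    have := key_ineq' hA x; rwa [h1] at this
  have b2 : x ⬝ᵥ x ≤ opN A * (1 / d) := by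
    have := key_ineq' hA.inv (symplJ n *ᵥ x)
    rwa [Matrix.nonsing_inv_nonsing_inv A hdet, h2, Jdot] at this
  have ht : 0 ≤ x ⬝ᵥ x := dot_self_nonneg x
  have ht2 : (x ⬝ᵥ x) * (x ⬝ᵥ x) ≤ opN A * opN A⁻¹ := by
    calc (x ⬝ᵥ x) * (x ⬝ᵥ x) ≤ (opN A⁻¹ * d) * (opN A * (1 / d)) :=
          mul_le_mul b1 b2 ht (mul_nonneg (opN_nonneg _) hd.le)
      _ = opN A * opN A⁻¹ := by field_simp
  nlinarith [ht2, hκ, ht, sq_nonneg (x ⬝ᵥ x - 1)]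

lemma colJ {n : ℕ} (M : Mat n) (a b : Fin n ⊕ Fin n) :
    (Mᵀ * symplJ n * M) a b = (fun i => M i a) ⬝ᵥ (symplJ n *ᵥ fun i => M i b) := by
  rw [Matrix.mul_assoc]
  simp [Matrix.mul_apply, Matrix.mulVec, dotProduct, Matrix.transpose_apply, Finset.mul_sum]

theorem stmt18 {n : ℕ} (A : Mat n) (hA : A.PosDef) (M : Mat n) (hM : InSpA n n A M) :
    ∑ i, ∑ j, (M i j) ^ 2 ≤ (2 * n : ℝ) * (opN A * opN A⁻¹) := by
  obtain ⟨hSp, hcols⟩ := hM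
  rcases Nat.eq_zero_or_pos n with hn | hn
  · subst hn
    simp
  have hdet : IsUnit A.det := (Matrix.isUnit_iff_isUnit_det A).mp hA.isUnit
  have hAAinv : A * A⁻¹ = 1 := A.mul_nonsing_inv hdet
  have hκ : (1:ℝ) ≤ opN A * opN A⁻¹ := by
    haveI : Nonempty (Fin n ⊕ Fin n) := ⟨Sum.inl ⟨0, hn⟩⟩
    calc (1:ℝ) = ‖Matrix.toEuclideanCLM (𝕜 := ℝ) (A * A⁻¹)‖ := by
          rw [hAAinv, _root_.map_one, norm_one]
      _ = ‖Matrix.toEuclideanCLM (𝕜 := ℝ) A * Matrix.toEuclideanCLM (𝕜 := ℝ) A⁻¹‖ := by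
          rw [_root_.map_mul]
      _ ≤ opN A * opN A⁻¹ := norm_mul_le _ _
  have hsp : ∀ a b, ((fun i => M i a) ⬝ᵥ (symplJ n *ᵥ fun i => M i b)) = symplJ n a b := by
    intro a b
    have hSp' : Mᵀ * symplJ n * M = symplJ n := hSp
    rw [← colJ, hSp']
  have colbnd : ∀ c : Fin n ⊕ Fin n,
      ((fun i => M i c) ⬝ᵥ fun i => M i c) ≤ opN A * opN A⁻¹ := by
    intro c
    rcases c with j | j
    all_goals {
      set u : Fin n ⊕ Fin n → ℝ := fun i => M i (Sum.inl j) with hu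
      set v : Fin n ⊕ Fin n → ℝ := fun i => M i (Sum.inr j) with hv
      set d : ℝ := sEig A (j + 1) with hd
      obtain ⟨hAu, hAv⟩ := hcols j
      have huv : u ⬝ᵥ (symplJ n *ᵥ v) = 1 := by
        have := hsp (Sum.inl j) (Sum.inr j)
        simpa [symplJ, Matrix.one_apply] using this
      have hvu : v ⬝ᵥ (symplJ n *ᵥ u) = -1 := by
        have := hsp (Sum.inr j) (Sum.inl j)
        simpa [symplJ, Matrix.one_apply] using this
      have hdu : u ⬝ᵥ A *ᵥ u = d := by
        rw [hAu]
        rw [← hv]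
        simp [dotProduct_smul, huv, hd]
      have hdv : v ⬝ᵥ A *ᵥ v = d := by
        rw [hAv]
        rw [← hu]
        simp [dotProduct_smul, hvu, hd]
      have hune : u ≠ 0 := by
        intro h0
        rw [h0] at huv
        simp at huv
      have hdpos : (0:ℝ) < d := by
        have := hA.dotProduct_mulVec_pos hune
        rw [← hdu]
        simpa using this
      have hinvJu : A⁻¹ *ᵥ (symplJ n *ᵥ u) = (-(1/d)) • v := by
        have h := congrArg (fun w => A⁻¹ *ᵥ w) hAv
        simp only [Matrix.mulVec_mulVec, Matrix.mulVec_smul] at h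
        rw [A.nonsing_inv_mul hdet, Matrix.one_mulVec] at h
        have := congrArg (fun w => (-(1/d)) • w) h
        simp only [smul_smul] at this
        rw [this]
        rw [Matrix.mulVec_mulVec, ← hd, show -(1/d) * -d = 1 by
          rw [neg_mul_neg, one_div, inv_mul_cancel₀ hdpos.ne'], one_smul]
      have hinvJv : A⁻¹ *ᵥ (symplJ n *ᵥ v) = (1/d) • u := by
        have h := congrArg (fun w => A⁻¹ *ᵥ w) hAu
        simp only [Matrix.mulVec_mulVec, Matrix.mulVec_smul] at h
        rw [A.nonsing_inv_mul hdet, Matrix.one_mulVec] at h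
        have := congrArg (fun w => (1/d) • w) h
        simp only [smul_smul] at this
        rw [this]
        rw [Matrix.mulVec_mulVec, ← hd, show (1/d) * d = 1 by
          rw [one_div, inv_mul_cancel₀ hdpos.ne'], one_smul]
      have qu : (symplJ n *ᵥ u) ⬝ᵥ (A⁻¹ *ᵥ (symplJ n *ᵥ u)) = 1 / d := by
        rw [hinvJu]
        rw [dotProduct_smul]
        rw [dotProduct_comm (symplJ n *ᵥ u) v] at *
        rw [hvu]
        simp
      have qv : (symplJ n *ᵥ v) ⬝ᵥ (A⁻¹ *ᵥ (symplJ n *ᵥ v)) = 1 / d := by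
        rw [hinvJv]
        rw [dotProduct_smul]
        rw [dotProduct_comm (symplJ n *ᵥ v) u] at *
        rw [huv]
        simp
      first
      | exact one_col_bound hA u d hdpos hκ hdu qu
      | exact one_col_bound hA v d hdpos hκ hdv qv
    }
  have hsum : ∑ i, ∑ j, (M i j) ^ 2
      = ∑ c : Fin n ⊕ Fin n, ((fun i => M i c) ⬝ᵥ fun i => M i c) := by
    rw [Finset.sum_comm]
    simp [dotProduct, sq]
  rw [hsum]
  calc ∑ c : Fin n ⊕ Fin n, ((fun i => M i c) ⬝ᵥ fun i => M i c)
      ≤ ∑ _c : Fin n ⊕ Fin n, (opN A * opN A⁻¹) :=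
        Finset.sum_le_sum fun c _ => colbnd c
    _ = (2 * n : ℝ) * (opN A * opN A⁻¹) := by
        rw [Finset.sum_const, Finset.card_univ, Fintype.card_sum, Fintype.card_fin,
          nsmul_eq_mul]
        push_cast
        ring
end

section
/- Define Φ(A) = i·A^{1/2}·J·A^{1/2} for 2×2 real positive definite matrices A (here n = 1 and J = [[0,1],[−1,0]]), so Φ takes values in the 2×2 complex Hermitian matrices. Then Φ is neither midpoint-convex nor midpoint-concave with respect to the Loewner order: for A = diag(1,4) and I the 2×2 identity, Φ((I+A)/2) − (1/2)(Φ(I) + Φ(A)) = (i/2)·[[0, √10 − 3],[−(√10 − 3), 0]], which is neither positive semidefinite nor negative semidefinite. -/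
open Matrix
open scoped ComplexOrder

/-- The square root of a positive semidefinite matrix, as `Matrix.PosSemidef.sqrt` was defined
in Mathlib of December 2024 (since removed). -/
noncomputable def Matrix.PosSemidef.sqrt {n 𝕜 : Type*} [Fintype n] [RCLike 𝕜] [DecidableEq n]
    {A : Matrix n n 𝕜} (hA : A.PosSemidef) : Matrix n n 𝕜 :=
  hA.1.eigenvectorUnitary.1 * diagonal ((↑) ∘ (√·) ∘ hA.1.eigenvalues) *
    (star hA.1.eigenvectorUnitary : Matrix n n 𝕜)

/-- `Φ(X) = i · X^{1/2} J X^{1/2}` for `2 × 2` positive semidefinite real `X`,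
with `J = [[0,1],[-1,0]]`, viewed as a complex (Hermitian) matrix. -/
noncomputable def Phi19 (X : Matrix (Fin 2) (Fin 2) ℝ) (hX : X.PosSemidef) :
    Matrix (Fin 2) (Fin 2) ℂ :=
  Complex.I • ((Matrix.PosSemidef.sqrt hX * !![0, 1; -1, 0] * Matrix.PosSemidef.sqrt hX).map (Complex.ofReal))

section
open scoped MatrixOrder

lemma Matrix.PosSemidef.eq_sqrt_of_sq_eq {n 𝕜 : Type*} [Fintype n] [RCLike 𝕜] [DecidableEq n]
    {B : Matrix n n 𝕜} (hB : B.PosSemidef) {A : Matrix n n 𝕜} (hA : A.PosSemidef)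
    (h : B ^ 2 = A) : B = hA.sqrt := by
  have h1 : hA.sqrt = cfc Real.sqrt A := by
    rw [hA.1.cfc_eq]
    simp [Matrix.PosSemidef.sqrt, IsHermitian.cfc, Unitary.conjStarAlgAut_apply]
  have h2 : CFC.sqrt A = B := CFC.sqrt_unique (by rw [← h, pow_two]) hB.nonneg
  rw [h1, ← h2, CFC.sqrt_eq_real_sqrt A hA.nonneg, cfcₙ_eq_cfc]

end


lemma diag2_psd {a b : ℝ} (ha : 0 ≤ a) (hb : 0 ≤ b) :
    (!![a, 0; 0, b] : Matrix (Fin 2) (Fin 2) ℝ).PosSemidef := by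
  have h : (!![a, 0; 0, b] : Matrix (Fin 2) (Fin 2) ℝ) = Matrix.diagonal ![a, b] := by
    ext i j; fin_cases i <;> fin_cases j <;> simp [Matrix.diagonal]
  rw [h]
  exact Matrix.posSemidef_diagonal_iff.mpr (by intro i; fin_cases i <;> assumption)

lemma sqrtA (hA : (!![1, 0; 0, 4] : Matrix (Fin 2) (Fin 2) ℝ).PosSemidef) :
    hA.sqrt = !![1, 0; 0, 2] := by
  refine ((diag2_psd zero_le_one (by norm_num)).eq_sqrt_of_sq_eq hA ?_).symm
  rw [pow_two]
  ext i j; fin_cases i <;> fin_cases j <;> simp [Matrix.mul_apply, Fin.sum_univ_two] <;> norm_num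

lemma sqrtI (hI : (1 : Matrix (Fin 2) (Fin 2) ℝ).PosSemidef) :
    hI.sqrt = 1 :=
  (Matrix.PosSemidef.one.eq_sqrt_of_sq_eq hI (by rw [one_pow])).symm

lemma sqrtMid (hMid : (((1 : ℝ) / 2) • (1 + !![1, 0; 0, 4]) : Matrix (Fin 2) (Fin 2) ℝ).PosSemidef) :
    hMid.sqrt = !![1, 0; 0, Real.sqrt 10 / 2] := by
  refine ((diag2_psd zero_le_one (by positivity)).eq_sqrt_of_sq_eq hMid ?_).symm
  have h10 : Real.sqrt 10 * Real.sqrt 10 = 10 := Real.mul_self_sqrt (by norm_num)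
  rw [pow_two]
  ext i j
  fin_cases i <;> fin_cases j <;>
    simp [Matrix.mul_apply, Fin.sum_univ_two, Matrix.one_apply] <;> nlinarith [h10]

theorem stmt19
    (hA : (!![1, 0; 0, 4] : Matrix (Fin 2) (Fin 2) ℝ).PosSemidef)
    (hI : (1 : Matrix (Fin 2) (Fin 2) ℝ).PosSemidef)
    (hMid : (((1 : ℝ) / 2) • (1 + !![1, 0; 0, 4]) : Matrix (Fin 2) (Fin 2) ℝ).PosSemidef) :
    Phi19 _ hMid - (1 / 2 : ℂ) • (Phi19 _ hI + Phi19 _ hA) =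
      (Complex.I / 2) •
        !![(0 : ℂ), ((Real.sqrt 10 - 3 : ℝ) : ℂ); -((Real.sqrt 10 - 3 : ℝ) : ℂ), 0] ∧
    ¬ (Phi19 _ hMid - (1 / 2 : ℂ) • (Phi19 _ hI + Phi19 _ hA)).PosSemidef ∧
    ¬ (-(Phi19 _ hMid - (1 / 2 : ℂ) • (Phi19 _ hI + Phi19 _ hA))).PosSemidef := by
  have heq : Phi19 _ hMid - (1 / 2 : ℂ) • (Phi19 _ hI + Phi19 _ hA) =
      (Complex.I / 2) •
        !![(0 : ℂ), ((Real.sqrt 10 - 3 : ℝ) : ℂ); -((Real.sqrt 10 - 3 : ℝ) : ℂ), 0] := by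
    unfold Phi19
    rw [sqrtA hA, sqrtI hI, sqrtMid hMid]
    ext i j
    fin_cases i <;> fin_cases j <;>
      simp [Matrix.mul_apply, Fin.sum_univ_two, Matrix.one_apply, Complex.ext_iff] <;>
      ring
  have hgt : (3 : ℝ) < Real.sqrt 10 := by
    have : Real.sqrt 9 < Real.sqrt 10 := Real.sqrt_lt_sqrt (by norm_num) (by norm_num)
    simpa [show (9:ℝ) = 3^2 by norm_num, Real.sqrt_sq] using this
  refine ⟨heq, ?_, ?_⟩
  · intro h
    have := h.dotProduct_mulVec_nonneg ![1, Complex.I]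
    rw [heq] at this
    simp [Matrix.mulVec, dotProduct, Fin.sum_univ_two, Complex.ext_iff,
      Complex.le_def] at this
    linarith
  · intro h
    have := h.dotProduct_mulVec_nonneg ![1, -Complex.I]
    rw [heq] at this
    simp [Matrix.mulVec, dotProduct, Fin.sum_univ_two, Complex.ext_iff,
      Complex.le_def] at this
    linarith
end
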